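/- arXiv:math/0610421 — 6 statements merged into one kernel-verified Lean document; each statement's English description precedes it below -/
import Mathlib

section
/- Let K be a compact scattered topological space, and for each t ∈ K fix a compact open set V_t with V_t ∩ K^(α(t)) = {t}. Let B be a nonempty finite subset of K and let γ be the maximal ordinal such that B ∩ K^(γ) ≠ ∅. Then V_B ∩ K^(γ) = B ∩ K^(γ), and consequently V_B ∩ K^(γ+1) = ∅. -/
universe u

open Set

/-- Iterated derived sets: `K^(0) = K` and `K^(γ) = ⋂_{α<γ} (K^(α))'` for `γ > 0`. -/
noncomputable def iterDerived (K : Type u) [TopologicalSpace K] : Ordinal.{u} → Set K :=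
  fun γ =>
    if γ = 0 then Set.univ
    else ⋂ α : {α : Ordinal.{u} // α < γ}, derivedSet (iterDerived K α.1)
termination_by γ => γ
decreasing_by exact α.2

/-- A topological space is scattered if every nonempty closed subset has an isolated point. -/
def IsScattered (K : Type u) [TopologicalSpace K] : Prop :=
  ∀ C : Set K, IsClosed C → C.Nonempty → ∃ x ∈ C, x ∉ derivedSet C


theorem iterDerived_anti (K : Type u) [TopologicalSpace K] {δ γ : Ordinal.{u}} (h : δ ≤ γ) :
    iterDerived K γ ⊆ iterDerived K δ := by
  rcases eq_or_ne δ 0 with rfl | hδ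
  · have h0 : iterDerived K 0 = Set.univ := by rw [iterDerived]; simp
    rw [h0]; exact subset_univ _
  · have hγ : γ ≠ 0 := fun h0 => hδ (le_antisymm (h0 ▸ h) zero_le)
    rw [iterDerived, iterDerived, if_neg hδ, if_neg hγ]
    exact fun x hx => mem_iInter.2 fun a => mem_iInter.1 hx ⟨a.1, lt_of_lt_of_le a.2 h⟩

theorem stmt_0 (K : Type u) [TopologicalSpace K] [CompactSpace K]
    (hscat : IsScattered K)
    (α : K → Ordinal.{u})
    (hα : ∀ t, t ∈ iterDerived K (α t) ∧ t ∉ iterDerived K (α t + 1))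
    (V : K → Set K)
    (hVcomp : ∀ t, IsCompact (V t)) (hVopen : ∀ t, IsOpen (V t))
    (hV : ∀ t, V t ∩ iterDerived K (α t) = {t})
    (B : Finset K) (hB : B.Nonempty)
    (γ : Ordinal.{u})
    (hγmem : ((B : Set K) ∩ iterDerived K γ).Nonempty)
    (hγmax : ∀ δ : Ordinal.{u}, ((B : Set K) ∩ iterDerived K δ).Nonempty → δ ≤ γ) :
    (⋃ t ∈ B, V t) ∩ iterDerived K γ = (B : Set K) ∩ iterDerived K γ ∧
    (⋃ t ∈ B, V t) ∩ iterDerived K (γ + 1) = ∅ := by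
  have htmem : ∀ t : K, t ∈ V t := fun t => ((hV t).ge (mem_singleton t)).1
  have hαle : ∀ t ∈ B, α t ≤ γ := fun t ht => hγmax _ ⟨t, ht, (hα t).1⟩
  constructor
  · ext x
    simp only [mem_inter_iff, mem_iUnion, exists_prop]
    constructor
    · rintro ⟨⟨t, ht, hxt⟩, hxγ⟩
      have hx : x ∈ V t ∩ iterDerived K (α t) :=
        ⟨hxt, iterDerived_anti K (hαle t ht) hxγ⟩
      rw [hV t] at hx
      exact ⟨hx ▸ ht, hxγ⟩
    · rintro ⟨hxB, hxγ⟩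
      exact ⟨⟨x, hxB, htmem x⟩, hxγ⟩
  · ext x
    simp only [mem_inter_iff, mem_iUnion, exists_prop, mem_empty_iff_false, iff_false, not_and]
    rintro ⟨t, ht, hxt⟩ hx1
    have hx : x ∈ V t ∩ iterDerived K (α t) :=
      ⟨hxt, iterDerived_anti K ((hαle t ht).trans (Order.le_succ γ)) hx1⟩
    rw [hV t] at hx
    have : t ∈ iterDerived K (γ + 1) := hx ▸ hx1
    exact absurd (hγmax _ ⟨t, ht, this⟩) (by simpa using (Order.lt_succ γ).not_le)
end

section
/- Let K be a compact scattered topological space, with compact open sets V_t (t ∈ K) fixed so that V_t ∩ K^(α(t)) = {t}. For every nonempty closed subset H of K there exists an admissible finite set A ⊆ K with A ⊆ H ⊆ V_A. -/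
universe u

open Set

lemma iterDerived_eq (K : Type u) [TopologicalSpace K] (γ : Ordinal.{u}) :
    iterDerived K γ = if γ = 0 then Set.univ
      else ⋂ α : {α : Ordinal.{u} // α < γ}, derivedSet (iterDerived K α.1) := by
  rw [iterDerived]

lemma isClosed_derivedSet_of_isClosed {K : Type u} [TopologicalSpace K] {S : Set K}
    (hS : IsClosed S) : IsClosed (derivedSet S) := by
  rw [isClosed_iff_derivedSet_subset]
  intro x hx
  rw [mem_derivedSet, accPt_iff_nhds]
  intro U hU
  rw [mem_derivedSet, accPt_iff_nhds] at hx
  obtain ⟨y, ⟨hyU, hyD⟩, hyx⟩ := hx U hU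
  have hyS : y ∈ S := by
    have := derivedSet_subset_closure S hyD
    rwa [hS.closure_eq] at this
  exact ⟨y, ⟨hyU, hyS⟩, hyx⟩

lemma isClosed_iterDerived (K : Type u) [TopologicalSpace K] (γ : Ordinal.{u}) :
    IsClosed (iterDerived K γ) := by
  induction γ using Ordinal.induction with
  | _ γ IH =>
    rw [iterDerived_eq]
    split
    · exact isClosed_univ
    · exact isClosed_iInter fun a => isClosed_derivedSet_of_isClosed (IH a.1 a.2)

lemma iterDerived_subset_derivedSet (K : Type u) [TopologicalSpace K] {a γ : Ordinal.{u}}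
    (h : a < γ) : iterDerived K γ ⊆ derivedSet (iterDerived K a) := by
  have hγ : γ ≠ 0 := pos_iff_ne_zero.mp (lt_of_le_of_lt (zero_le (a := a)) h)
  rw [iterDerived_eq K γ, if_neg hγ]
  exact Set.iInter_subset (fun b : {b : Ordinal.{u} // b < γ} => derivedSet (iterDerived K b.1)) ⟨a, h⟩

lemma iterDerived_antitone (K : Type u) [TopologicalSpace K] {a γ : Ordinal.{u}}
    (h : a ≤ γ) : iterDerived K γ ⊆ iterDerived K a := by
  rcases eq_or_lt_of_le h with rfl | h
  · exact subset_rfl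
  · exact (iterDerived_subset_derivedSet K h).trans
      ((isClosed_iff_derivedSet_subset _).mp (isClosed_iterDerived K a))


/-- A finite set `A` is admissible (w.r.t. the family `V`) if `s ∉ V t` whenever
`s` and `t` are distinct elements of `A`. -/
def Admissible {K : Type u} (V : K → Set K) (A : Finset K) : Prop :=
  ∀ s ∈ A, ∀ t ∈ A, s ≠ t → s ∉ V t

lemma aux_main (K : Type u) [TopologicalSpace K] [CompactSpace K]
    (α : K → Ordinal.{u})
    (hα : ∀ t, t ∈ iterDerived K (α t) ∧ t ∉ iterDerived K (α t + 1))
    (V : K → Set K) (hVopen : ∀ t, IsOpen (V t))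
    (hV : ∀ t, V t ∩ iterDerived K (α t) = {t}) :
    ∀ δ : Ordinal.{u}, ∀ H : Set K, IsClosed H → H.Nonempty → H ∩ iterDerived K δ = ∅ →
      ∃ A : Finset K, Admissible V A ∧ (A : Set K) ⊆ H ∧ H ⊆ ⋃ t ∈ A, V t := by
  classical
  have hmemV : ∀ t, t ∈ V t := by
    intro t
    have : t ∈ V t ∩ iterDerived K (α t) := by rw [hV t]; exact rfl
    exact this.1
  intro δ
  induction δ using Ordinal.induction with
  | _ δ IH =>
    intro H hHcl hHne hdis
    rcases Ordinal.zero_or_succ_or_isSuccLimit δ with rfl | ⟨ε, rfl⟩ | hlim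
    · exfalso
      rw [iterDerived_eq, if_pos rfl, inter_univ] at hdis
      exact hHne.ne_empty hdis
    · -- successor case
      by_cases hε : H ∩ iterDerived K ε = ∅
      · exact IH ε (Order.lt_succ ε) H hHcl hHne hε
      · set D := H ∩ iterDerived K ε with hD
        have hDne : D.Nonempty := nonempty_iff_ne_empty.mpr hε
        have hDcomp : IsCompact D := (hHcl.inter (isClosed_iterDerived K ε)).isCompact
        have hsucc : Order.succ ε = ε + 1 := (Ordinal.add_one_eq_succ ε).symm
        have hαD : ∀ t ∈ D, α t = ε := by
          rintro t ⟨htH, htε⟩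
          rcases lt_trichotomy (α t) ε with h | h | h
          · exfalso
            have h1 : α t + 1 ≤ ε := by
              rw [Ordinal.add_one_eq_succ]; exact Order.succ_le_of_lt h
            exact (hα t).2 (iterDerived_antitone K h1 htε)
          · exact h
          · exfalso
            have h1 : ε + 1 ≤ α t := by
              rw [Ordinal.add_one_eq_succ]; exact Order.succ_le_of_lt h
            have : t ∈ H ∩ iterDerived K (Order.succ ε) := by
              refine ⟨htH, ?_⟩
              rw [hsucc]
              exact iterDerived_antitone K h1 (hα t).1
            rw [hdis] at this
            exact this
        -- D is finite
        have hcover : D ⊆ ⋃ t ∈ D, V t := fun s hs => mem_biUnion hs (hmemV s)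
        obtain ⟨F, hFD, hFfin, hFcov⟩ :=
          hDcomp.elim_finite_subcover_image (fun t _ => hVopen t) hcover
        have hDF : D ⊆ F := by
          intro s hs
          obtain ⟨t, htF, hsVt⟩ := mem_iUnion₂.mp (hFcov hs)
          have : s ∈ V t ∩ iterDerived K (α t) := ⟨hsVt, by rw [hαD t (hFD htF)]; exact hs.2⟩
          rw [hV t] at this
          exact this ▸ htF
        have hDfin : D.Finite := hFfin.subset hDF
        set A₀ := hDfin.toFinset with hA₀
        have hA₀D : (A₀ : Set K) = D := hDfin.coe_toFinset
        have hadm₀ : ∀ s ∈ D, ∀ t ∈ D, s ≠ t → s ∉ V t := by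
          intro s hs t ht hne hsVt
          have : s ∈ V t ∩ iterDerived K (α t) := ⟨hsVt, by rw [hαD t ht]; exact hs.2⟩
          rw [hV t] at this
          exact hne this
        set H' := H \ ⋃ t ∈ A₀, V t with hH'
        have hH'cl : IsClosed H' := hHcl.sdiff (isOpen_biUnion fun t _ => hVopen t)
        rcases eq_empty_or_nonempty H' with hH'e | hH'ne
        · refine ⟨A₀, ?_, ?_, ?_⟩
          · intro s hs t ht hne
            rw [← Finset.mem_coe, hA₀D] at hs ht
            exact hadm₀ s hs t ht hne
          · rw [hA₀D]; exact fun s hs => hs.1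
          · exact diff_eq_empty.mp hH'e
        · have hdis' : H' ∩ iterDerived K ε = ∅ := by
            rw [eq_empty_iff_forall_notMem]
            rintro x ⟨hxH', hxε⟩
            have hxD : x ∈ D := ⟨hxH'.1, hxε⟩
            have hxA₀ : x ∈ A₀ := by rw [← Finset.mem_coe, hA₀D]; exact hxD
            exact hxH'.2 (mem_biUnion hxA₀ (hmemV x))
          obtain ⟨A', hadm', hsub', hcov'⟩ :=
            IH ε (Order.lt_succ ε) H' hH'cl hH'ne hdis'
          have hA'α : ∀ t ∈ A', α t < ε := by
            intro t ht
            by_contra hle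
            push_neg at hle
            have : t ∈ H' ∩ iterDerived K ε :=
              ⟨hsub' ht, iterDerived_antitone K hle (hα t).1⟩
            rw [hdis'] at this
            exact this
          refine ⟨A₀ ∪ A', ?_, ?_, ?_⟩
          · intro s hs t ht hne hsVt
            rw [Finset.mem_union] at hs ht
            rcases hs with hs | hs <;> rcases ht with ht | ht
            · rw [← Finset.mem_coe, hA₀D] at hs ht
              exact hadm₀ s hs t ht hne hsVt
            · -- s ∈ A₀ (so s ∈ K^ε), t ∈ A' (α t < ε)
              rw [← Finset.mem_coe, hA₀D] at hs
              have h1 : α t + 1 ≤ ε := by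
                rw [Ordinal.add_one_eq_succ]; exact Order.succ_le_of_lt (hA'α t ht)
              have hsα : s ∈ iterDerived K (α t) :=
                iterDerived_antitone K (le_of_lt (hA'α t ht)) hs.2
              have : s ∈ V t ∩ iterDerived K (α t) := ⟨hsVt, hsα⟩
              rw [hV t] at this
              exact hne this
            · -- s ∈ A', t ∈ A₀ : s ∈ H' disjoint from V t
              exact (hsub' hs).2 (mem_biUnion ht hsVt)
            · exact hadm' s hs t ht hne hsVt
          · rw [Finset.coe_union]
            rintro s (hs | hs)
            · rw [hA₀D] at hs; exact hs.1
            · exact (hsub' hs).1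
          · intro x hx
            by_cases hxU : x ∈ ⋃ t ∈ A₀, V t
            · obtain ⟨t, ht, hxt⟩ := mem_iUnion₂.mp hxU
              exact mem_biUnion (Finset.mem_union_left _ ht) hxt
            · obtain ⟨t, ht, hxt⟩ := mem_iUnion₂.mp (hcov' ⟨hx, hxU⟩)
              exact mem_biUnion (Finset.mem_union_right _ ht) hxt
    · -- limit case
      have hex : ∃ β < δ, H ∩ iterDerived K β = ∅ := by
        by_contra hcon
        push_neg at hcon
        have hne' : ∀ β : {β : Ordinal.{u} // β < δ},
            (H ∩ iterDerived K β.1).Nonempty := fun β => hcon β.1 β.2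
        haveI : Nonempty {β : Ordinal.{u} // β < δ} :=
          ⟨⟨0, pos_iff_ne_zero.mpr hlim.ne_zero⟩⟩
        have hdir : Directed (· ⊇ ·) (fun β : {β : Ordinal.{u} // β < δ} =>
            H ∩ iterDerived K β.1) := by
          intro b c
          refine ⟨⟨max b.1 c.1, max_lt b.2 c.2⟩, ?_, ?_⟩
          · exact inter_subset_inter_right _ (iterDerived_antitone K (le_max_left _ _))
          · exact inter_subset_inter_right _ (iterDerived_antitone K (le_max_right _ _))
        obtain ⟨x, hx⟩ := IsCompact.nonempty_iInter_of_directed_nonempty_isCompact_isClosed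
          _ hdir hne'
          (fun β => (hHcl.inter (isClosed_iterDerived K β.1)).isCompact)
          (fun β => hHcl.inter (isClosed_iterDerived K β.1))
        have hxH : x ∈ H :=
          (mem_iInter.mp hx ⟨0, pos_iff_ne_zero.mpr hlim.ne_zero⟩).1
        have hxδ : x ∈ iterDerived K δ := by
          rw [iterDerived_eq, if_neg hlim.ne_zero, mem_iInter]
          intro b
          have ha1 : b.1 + 1 < δ := by
            rw [Ordinal.add_one_eq_succ]; exact hlim.succ_lt b.2
          have hlt : b.1 < b.1 + 1 := by
            rw [Ordinal.add_one_eq_succ]; exact Order.lt_succ b.1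
          exact iterDerived_subset_derivedSet K hlt (mem_iInter.mp hx ⟨b.1 + 1, ha1⟩).2
        have : x ∈ H ∩ iterDerived K δ := ⟨hxH, hxδ⟩
        rw [hdis] at this
        exact this
      obtain ⟨β, hβδ, hβ⟩ := hex
      exact IH β hβδ H hHcl hHne hβ


theorem stmt_1 (K : Type u) [TopologicalSpace K] [CompactSpace K]
    (hscat : IsScattered K)
    (α : K → Ordinal.{u})
    (hα : ∀ t, t ∈ iterDerived K (α t) ∧ t ∉ iterDerived K (α t + 1))
    (V : K → Set K)
    (hVcomp : ∀ t, IsCompact (V t)) (hVopen : ∀ t, IsOpen (V t))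
    (hV : ∀ t, V t ∩ iterDerived K (α t) = {t})
    (H : Set K) (hHcl : IsClosed H) (hHne : H.Nonempty) :
    ∃ A : Finset K, Admissible V A ∧ (A : Set K) ⊆ H ∧ H ⊆ ⋃ t ∈ A, V t := by
  have hdis : H ∩ iterDerived K (⨆ t : K, α t + 1) = ∅ := by
    rw [eq_empty_iff_forall_notMem]
    rintro x ⟨-, hx⟩
    have hle : α x + 1 ≤ ⨆ t : K, α t + 1 := Ordinal.le_iSup (fun t => α t + 1) x
    exact (hα x).2 (iterDerived_antitone K hle hx)
  exact aux_main K α hα V hVopen hV (⨆ t : K, α t + 1) H hHcl hHne hdis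
end

section
/- Let K be a compact Hausdorff space, let m be a natural number or ∞, and let θ : ℝ → ℝ be of class C^m. Then the mapping Θ : C(K) → C(K) given by Θ(f) = θ ∘ f is of class C^m. -/
open ContinuousMap Metric Set

private lemma nemytskii_hasFDerivAt {K : Type*} [TopologicalSpace K] [CompactSpace K]
    {θ θ' : ℝ → ℝ} (hd : ∀ x, HasDerivAt θ (θ' x) x) (hc : Continuous θ')
    (Θ Θ' : C(K, ℝ) → C(K, ℝ)) (hΘ : ∀ f t, Θ f t = θ (f t)) (hΘ' : ∀ f t, Θ' f t = θ' (f t))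
    (f : C(K, ℝ)) :
    HasFDerivAt Θ (ContinuousLinearMap.mul ℝ C(K, ℝ) (Θ' f)) f := by
  rw [hasFDerivAt_iff_isLittleO_nhds_zero, Asymptotics.isLittleO_iff]
  intro c hc0
  -- uniform continuity of θ' on a compact neighborhood of the range of f
  set M : ℝ := ‖f‖ with hM
  have hS : IsCompact (Icc (-(M + 1)) (M + 1)) := isCompact_Icc
  have huc := hS.uniformContinuousOn_of_continuous hc.continuousOn
  rw [Metric.uniformContinuousOn_iff] at huc
  obtain ⟨δ₀, hδ₀, hδ⟩ := huc c hc0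
  have hδ1 : (0 : ℝ) < min δ₀ 1 := lt_min hδ₀ one_pos
  rw [Metric.eventually_nhds_iff]
  refine ⟨min δ₀ 1, hδ1, fun {h} hh => ?_⟩
  rw [dist_zero_right] at hh
  have hnorm : ∀ g : C(K, ℝ), ∀ t, |g t| ≤ ‖g‖ := fun g t => g.norm_coe_le_norm t
  refine ContinuousMap.norm_le _ (by positivity) |>.mpr fun t => ?_
  have hft : |f t| ≤ M := hnorm f t
  have hht : |h t| ≤ ‖h‖ := hnorm h t
  -- pointwise estimate
  have key : |θ (f t + h t) - θ (f t) - θ' (f t) * h t| ≤ c * ‖h‖ := by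
    set a := f t
    -- apply the mean value inequality to x ↦ θ x - θ' a * x on the closed ball
    have hconv : Convex ℝ (closedBall a ‖h‖) := convex_closedBall a ‖h‖
    have hmem : ∀ x ∈ closedBall a ‖h‖, x ∈ Icc (-(M + 1)) (M + 1) := by
      intro x hx
      rw [mem_closedBall, Real.dist_eq] at hx
      have h2 : |x| ≤ |a| + ‖h‖ := by
        calc |x| = |(x - a) + a| := by ring_nf
        _ ≤ |x - a| + |a| := abs_add_le _ _
        _ ≤ ‖h‖ + |a| := by linarith
        _ = |a| + ‖h‖ := by ring
      have h1 : ‖h‖ ≤ 1 := le_of_lt (lt_of_lt_of_le hh (min_le_right _ _))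
      have h3 : |x| ≤ M + 1 := by linarith
      have := abs_le.mp h3
      exact ⟨by linarith [this.1], this.2⟩
    have hbound : ∀ x ∈ closedBall a ‖h‖, ‖θ' x - θ' a‖ ≤ c := by
      intro x hx
      have hxS := hmem x hx
      have haS : a ∈ Icc (-(M + 1)) (M + 1) := by
        have := abs_le.mp hft
        constructor <;> simp only [a] <;> linarith [this.1, this.2]
      rw [mem_closedBall, Real.dist_eq] at hx
      have hdist : dist x a < δ₀ := by
        rw [Real.dist_eq]
        exact lt_of_le_of_lt hx (lt_of_lt_of_le hh (min_le_left _ _))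
      have := hδ x hxS a haS hdist
      rw [Real.dist_eq] at this
      exact le_of_lt this
    have hderiv : ∀ x ∈ closedBall a ‖h‖,
        HasDerivWithinAt (fun x => θ x - θ' a * x) (θ' x - θ' a) (closedBall a ‖h‖) x := by
      intro x _
      have h1 : HasDerivAt (fun x => θ' a * x) (θ' a) x := by
        simpa using (hasDerivAt_id x).const_mul (θ' a)
      exact ((hd x).sub h1).hasDerivWithinAt
    have ha : a ∈ closedBall a ‖h‖ := mem_closedBall_self (norm_nonneg h)
    have hb : a + h t ∈ closedBall a ‖h‖ := by
      rw [mem_closedBall, Real.dist_eq]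
      simpa using hht
    have := hconv.norm_image_sub_le_of_norm_hasDerivWithin_le hderiv hbound ha hb
    simp only [Real.norm_eq_abs] at this
    calc |θ (a + h t) - θ a - θ' a * h t|
        = |(θ (a + h t) - θ' a * (a + h t)) - (θ a - θ' a * a)| := by ring_nf
      _ ≤ c * |a + h t - a| := this
      _ = c * |h t| := by ring_nf
      _ ≤ c * ‖h‖ := by nlinarith [abs_nonneg (h t)]
  calc |(Θ (f + h) - Θ f - (ContinuousLinearMap.mul ℝ C(K, ℝ) (Θ' f)) h) t|
      = |θ (f t + h t) - θ (f t) - θ' (f t) * h t| := by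
        simp [ContinuousMap.sub_apply, ContinuousLinearMap.mul_apply',
          ContinuousMap.mul_apply, hΘ, hΘ', ContinuousMap.add_apply]
    _ ≤ c * ‖h‖ := key

private lemma nemytskii_contDiff_nat {K : Type*} [TopologicalSpace K] [CompactSpace K] :
    ∀ (n : ℕ) (θ : ℝ → ℝ), ContDiff ℝ (n : WithTop ℕ∞) θ →
      ∀ Θ : C(K, ℝ) → C(K, ℝ), (∀ f t, Θ f t = θ (f t)) →
      ContDiff ℝ (n : WithTop ℕ∞) Θ := by
  intro n
  induction n with
  | zero =>
    intro θ hθ Θ hΘ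
    have hΘeq : Θ = fun f => ContinuousMap.comp ⟨θ, hθ.continuous⟩ f := by
      funext f; ext t; exact hΘ f t
    rw [Nat.cast_zero, contDiff_zero, hΘeq]
    exact ContinuousMap.continuous_postcomp _
  | succ n IH =>
    intro θ hθ Θ hΘ
    rw [Nat.cast_succ] at hθ ⊢
    obtain ⟨hdiff, -, hθ'⟩ := contDiff_succ_iff_deriv.mp hθ
    have hd : ∀ x, HasDerivAt θ (deriv θ x) x := fun x => (hdiff x).hasDerivAt
    have hc : Continuous (deriv θ) := hθ'.continuous
    set Θ' : C(K, ℝ) → C(K, ℝ) := fun f => ⟨fun t => deriv θ (f t), hc.comp f.continuous⟩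
      with hΘ'def
    have IH' : ContDiff ℝ (n : WithTop ℕ∞) Θ' := IH (deriv θ) hθ' Θ' (fun f t => rfl)
    have hL : ContDiff ℝ (n : WithTop ℕ∞)
        (fun f => ContinuousLinearMap.mul ℝ C(K, ℝ) (Θ' f)) := by
      have hmul : ContDiff ℝ (n : WithTop ℕ∞) (ContinuousLinearMap.mul ℝ C(K, ℝ)) :=
        ContinuousLinearMap.contDiff (𝕜 := ℝ) (E := C(K, ℝ)) (F := C(K, ℝ) →L[ℝ] C(K, ℝ))
          (ContinuousLinearMap.mul ℝ C(K, ℝ))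
      exact hmul.comp IH'
    have := contDiff_succ_iff_hasFDerivAt.mpr
      ⟨fun f => ContinuousLinearMap.mul ℝ C(K, ℝ) (Θ' f), hL,
        fun f => nemytskii_hasFDerivAt hd hc Θ Θ' hΘ (fun f t => rfl) f⟩
    exact_mod_cast this

theorem stmt_3 (K : Type*) [TopologicalSpace K] [CompactSpace K] [T2Space K]
    (m : ℕ∞) (θ : ℝ → ℝ) (hθ : ContDiff ℝ (m : WithTop ℕ∞) θ)
    (Θ : C(K, ℝ) → C(K, ℝ)) (hΘ : ∀ f : C(K, ℝ), ∀ t : K, Θ f t = θ (f t)) :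
    ContDiff ℝ (m : WithTop ℕ∞) Θ := by
  cases m with
  | top =>
    rw [show ((⊤ : ℕ∞) : WithTop ℕ∞) = ((⊤ : ℕ∞) : WithTop ℕ∞) from rfl] at hθ ⊢
    exact contDiff_infty.mpr fun n =>
      nemytskii_contDiff_nat n θ (contDiff_infty.mp hθ n) Θ hΘ
  | coe n =>
    exact_mod_cast nemytskii_contDiff_nat n θ (by exact_mod_cast hθ) Θ hΘ
end

section
/- Let X be a real Banach space, let m be a natural number or ∞, and suppose there exists a function a : X → ℝ of class C^m with a(0) = 1 and a(x) = 0 whenever ‖x‖ ≥ 1. Then there exist a real number R > 1 and a function β : X → [0,1] of class C^m such that β(x) = 1 whenever ‖x‖ ≤ 1 and β(x) = 0 whenever ‖x‖ ≥ R. -/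
theorem stmt_6 (X : Type*) [NormedAddCommGroup X] [NormedSpace ℝ X] [CompleteSpace X]
    (m : ℕ∞) (a : X → ℝ) (ha : ContDiff ℝ (m : WithTop ℕ∞) a)
    (ha0 : a 0 = 1) (ha1 : ∀ x : X, 1 ≤ ‖x‖ → a x = 0) :
    ∃ R : ℝ, 1 < R ∧ ∃ β : X → ℝ, ContDiff ℝ (m : WithTop ℕ∞) β ∧
      (∀ x, β x ∈ Set.Icc (0 : ℝ) 1) ∧
      (∀ x : X, ‖x‖ ≤ 1 → β x = 1) ∧
      (∀ x : X, R ≤ ‖x‖ → β x = 0) := by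
  -- continuity of a at 0 gives δ
  have hc : ContinuousAt a 0 := ha.continuous.continuousAt
  rw [Metric.continuousAt_iff] at hc
  obtain ⟨δ₀, hδ₀, hδ⟩ := hc (1/2) (by norm_num)
  set δ : ℝ := min δ₀ 1 with hδdef
  have hδpos : 0 < δ := lt_min hδ₀ one_pos
  have hδle : δ ≤ 1 := min_le_right _ _
  have hhalf : ∀ x : X, ‖x‖ < δ → 1/2 < a x := by
    intro x hx
    have := hδ (x := x) (by simpa [dist_eq_norm] using hx.trans_le (min_le_left _ _))
    rw [Real.dist_eq, ha0, abs_sub_lt_iff] at this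
    linarith [this.2]
  refine ⟨2/δ, by rw [lt_div_iff₀ hδpos]; linarith, fun x => Real.smoothTransition (4 * a ((δ/2) • x) - 1), ?_, ?_, ?_, ?_⟩
  · exact Real.smoothTransition.contDiff.comp
      ((contDiff_const.mul (ha.comp (contDiff_const_smul _))).sub contDiff_const)
  · intro x
    exact ⟨Real.smoothTransition.nonneg _, Real.smoothTransition.le_one _⟩
  · intro x hx
    have h1 : ‖(δ/2) • x‖ < δ := by
      rw [norm_smul, Real.norm_eq_abs, abs_of_pos (by linarith)]
      nlinarith [norm_nonneg x]
    have := hhalf _ h1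
    exact Real.smoothTransition.one_of_one_le (by linarith)
  · intro x hx
    have h1 : (1:ℝ) ≤ ‖(δ/2) • x‖ := by
      rw [norm_smul, Real.norm_eq_abs, abs_of_pos (by linarith)]
      rw [div_le_iff₀ hδpos] at hx
      nlinarith
    show Real.smoothTransition _ = 0
    rw [ha1 _ h1]
    exact Real.smoothTransition.zero_of_nonpos (by norm_num)
end

section
/- Let K be a set, for each t ∈ K let φ_t be an Orlicz function such that the function x ↦ φ_t(|x|) is of class C^∞ on ℝ, and suppose there exist positive reals R < S with φ_t(R) = 0 and φ_t(S) ≥ 1 for all t ∈ K. Let X be a linear subspace of ℓ^∞(K) and suppose that, whenever f ∈ X and ‖f‖_φ = 1, there exist δ > 0 and a finite subset F of K such that φ_t(|g(t)|) = 0 whenever g ∈ X, ‖f − g‖∞ < δ and t ∉ F. Then the generalized Orlicz norm ‖·‖_φ is of class C^∞ on X \ {0}. -/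
open scoped ENNReal

/-- An Orlicz function: a convex function `φ : [0,∞) → [0,∞)` with `φ 0 = 0` and
`φ x → ∞` as `x → ∞`. -/
def IsOrliczFunction (φ : ℝ → ℝ) : Prop :=
  ConvexOn ℝ (Set.Ici 0) φ ∧ φ 0 = 0 ∧ (∀ x ∈ Set.Ici (0 : ℝ), 0 ≤ φ x) ∧
    Filter.Tendsto φ Filter.atTop Filter.atTop

/-- The set of `ρ > 0` with `∑_{t∈K} φ_t(|f t|/ρ) ≤ 1`; the generalized Orlicz norm of `f`
is the infimum of this set. -/
def orliczSet {K : Type*} (φ : K → ℝ → ℝ) (f : K → ℝ) : Set ℝ :=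
  {ρ : ℝ | 0 < ρ ∧ ∑' t, ENNReal.ofReal (φ t (|f t| / ρ)) ≤ 1}

open scoped Pointwise

set_option maxHeartbeats 1000000

noncomputable section

namespace OrliczProof

variable {ψ : ℝ → ℝ} {R S : ℝ}




lemma nonneg (h : IsOrliczFunction ψ) {x : ℝ} (hx : 0 ≤ x) : 0 ≤ ψ x :=
  h.2.2.1 x hx

lemma zero_on (h : IsOrliczFunction ψ) (hR : 0 ≤ R) (hψR : ψ R = 0)
    {x : ℝ} (hx0 : 0 ≤ x) (hxR : x ≤ R) : ψ x = 0 := by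
  rcases eq_or_lt_of_le hxR with rfl | hlt
  · exact hψR
  · have hRpos : 0 < R := lt_of_le_of_lt hx0 hlt
    have hble : x / R ≤ 1 := div_le_one_of_le₀ hxR hR
    have key : ψ ((1 - x / R) • (0:ℝ) + (x / R) • R)
        ≤ (1 - x / R) • ψ 0 + (x / R) • ψ R :=
      h.1.2 (Set.mem_Ici.mpr le_rfl) (Set.mem_Ici.mpr hR)
        (by linarith) (by positivity) (by ring)
    have hb : (x / R) * R = x := div_mul_cancel₀ x hRpos.ne'
    simp only [smul_eq_mul, mul_zero, h.2.1, zero_add] at key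
    rw [hb] at key
    have := nonneg h hx0
    nlinarith

lemma mono (h : IsOrliczFunction ψ) {x y : ℝ} (hx : 0 ≤ x) (hxy : x ≤ y) :
    ψ x ≤ ψ y := by
  rcases eq_or_lt_of_le (hx.trans hxy) with rfl | hy
  · obtain rfl : x = 0 := le_antisymm hxy hx
    exact le_rfl
  · have h2 : x / y ≤ 1 := div_le_one_of_le₀ hxy hy.le
    have key : ψ ((1 - x / y) • (0:ℝ) + (x / y) • y)
        ≤ (1 - x / y) • ψ 0 + (x / y) • ψ y :=
      h.1.2 (Set.mem_Ici.mpr le_rfl) (Set.mem_Ici.mpr (hx.trans hxy))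
        (by linarith) (by positivity) (by ring)
    have hb : (x / y) * y = x := div_mul_cancel₀ x hy.ne'
    simp only [smul_eq_mul, mul_zero, h.2.1, zero_add] at key
    rw [hb] at key
    nlinarith [nonneg h (hx.trans hxy)]

lemma one_lt (h : IsOrliczFunction ψ) (hR : 0 ≤ R) (hRS : R < S) (hψR : ψ R = 0)
    (hψS : 1 ≤ ψ S) {x : ℝ} (hx : S < x) : 1 < ψ x := by
  have hxR : R < x := hRS.trans hx
  have key : ψ (((x - S) / (x - R)) • R + ((S - R) / (x - R)) • x)
      ≤ ((x - S) / (x - R)) • ψ R + ((S - R) / (x - R)) • ψ x :=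
    h.1.2 (Set.mem_Ici.mpr hR) (Set.mem_Ici.mpr ((hR.trans hRS.le).trans hx.le))
      (by apply div_nonneg <;> linarith) (by apply div_nonneg <;> linarith)
      (by field_simp [sub_ne_zero.mpr hxR.ne']; ring)
  have hcomp : ((x - S) / (x - R)) • R + ((S - R) / (x - R)) • x = S := by
    rw [smul_eq_mul, smul_eq_mul]
    have hxRne : x - R ≠ 0 := by linarith
    field_simp
    ring
  rw [hcomp] at key
  simp only [smul_eq_mul, hψR, mul_zero, zero_add] at key
  have hb1 : (S - R) / (x - R) < 1 := by
    rw [div_lt_one (by linarith)]; linarith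
  have hb0 : 0 < (S - R) / (x - R) := by apply div_pos <;> linarith
  nlinarith


lemma convexOn_abs (h : IsOrliczFunction ψ) : ConvexOn ℝ (Set.Ici 0) (fun x => ψ |x|) := by
  refine ⟨convex_Ici 0, fun x hx y hy a b ha hb hab => ?_⟩
  have hx' : (0:ℝ) ≤ x := hx
  have hy' : (0:ℝ) ≤ y := hy
  have hcomb : 0 ≤ a * x + b * y := by positivity
  simp only [smul_eq_mul]
  rw [abs_of_nonneg hcomb, abs_of_nonneg hx', abs_of_nonneg hy']
  exact h.1.2 hx hy ha hb hab

lemma deriv_abs_pos (h : IsOrliczFunction ψ)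
    (hd : DifferentiableAt ℝ (fun y => ψ |y|) x)
    (hR : 0 ≤ R) (hψR : ψ R = 0) (hx : 0 ≤ x) (hψx : 0 < ψ x) :
    0 < deriv (fun y => ψ |y|) x := by
  have hRx : R < x := by
    by_contra hle
    push_neg at hle
    rw [zero_on h hR hψR hx hle] at hψx
    exact lt_irrefl 0 hψx
  have hs := (convexOn_abs h).slope_le_deriv (Set.mem_Ici.mpr hR) (Set.mem_Ici.mpr hx) hRx hd
  have hslope : slope (fun y => ψ |y|) R x = ψ x / (x - R) := by
    rw [slope_def_field]
    rw [abs_of_nonneg hx, abs_of_nonneg hR, hψR, sub_zero]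
  rw [hslope] at hs
  have : 0 < ψ x / (x - R) := div_pos hψx (by linarith)
  linarith

lemma deriv_abs_zero (h : IsOrliczFunction ψ) {x : ℝ} (hψx : ψ |x| = 0) :
    deriv (fun y => ψ |y|) x = 0 := by
  have hmin : IsLocalMin (fun y => ψ |y|) x := by
    apply Filter.Eventually.of_forall
    intro y
    simpa [hψx] using nonneg h (abs_nonneg y)
  exact hmin.deriv_eq_zero

lemma deriv_abs_neg' (h : IsOrliczFunction ψ)
    {x : ℝ} : deriv (fun y => ψ |y|) (-x) = -deriv (fun y => ψ |y|) x := by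
  have : (fun y => ψ |y|) = (fun y => ψ |(-y)|) := by
    funext y; rw [abs_neg]
  conv_lhs => rw [this]
  rw [deriv_comp_neg (f := fun y => ψ |y|), neg_neg]

lemma mul_deriv_abs_pos (h : IsOrliczFunction ψ)
    (hd : Differentiable ℝ (fun y => ψ |y|))
    (hR : 0 ≤ R) (hψR : ψ R = 0) {c : ℝ} (hψc : 0 < ψ |c|) :
    0 < c * deriv (fun y => ψ |y|) c := by
  rcases lt_trichotomy c 0 with hc | rfl | hc
  · have hpos := deriv_abs_pos h (hd (-c)) hR hψR (by linarith)
      (by rwa [abs_of_neg hc] at hψc)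
    have hneg : deriv (fun y => ψ |y|) c = -deriv (fun y => ψ |y|) (-c) := by
      have := deriv_abs_neg' h (x := -c)
      rwa [neg_neg] at this
    rw [hneg]
    nlinarith
  · simp [abs_zero, h.2.1] at hψc
  · have hpos := deriv_abs_pos h (hd c) hR hψR hc.le (by rwa [abs_of_pos hc] at hψc)
    exact mul_pos hc hpos

variable {K : Type*} {φ : K → ℝ → ℝ}

lemma mem_orliczSet_of_le (hφ : ∀ t, IsOrliczFunction (φ t)) (hR : 0 < R)
    (hφR : ∀ t, φ t R = 0) (f : K → ℝ) {ρ : ℝ} (hρ : 0 < ρ)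
    (hbd : ∀ t, |f t| ≤ R * ρ) : ρ ∈ orliczSet φ f := by
  refine ⟨hρ, ?_⟩
  have hz : ∀ t, ENNReal.ofReal (φ t (|f t| / ρ)) = 0 := by
    intro t
    rw [zero_on (hφ t) hR.le (hφR t) (by positivity) (by rw [div_le_iff₀ hρ]; exact hbd t)]
    simp
  rw [tsum_congr hz, tsum_zero]
  exact zero_le_one

lemma abs_le_of_mem (hφ : ∀ t, IsOrliczFunction (φ t)) (hR : 0 ≤ R) (hRS : R < S)
    (hφR : ∀ t, φ t R = 0) (hφS : ∀ t, 1 ≤ φ t S) (f : K → ℝ) {ρ : ℝ}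
    (hmem : ρ ∈ orliczSet φ f) (t : K) : |f t| ≤ S * ρ := by
  obtain ⟨hρ, hsum⟩ := hmem
  by_contra hgt
  push_neg at hgt
  have hSx : S < |f t| / ρ := by rw [lt_div_iff₀ hρ]; linarith
  have h1 : (1 : ℝ≥0∞) < ENNReal.ofReal (φ t (|f t| / ρ)) := by
    rw [ENNReal.lt_ofReal_iff_toReal_lt (by simp)]
    simpa using one_lt (hφ t) hR hRS (hφR t) (hφS t) hSx
  exact absurd (le_trans (ENNReal.le_tsum t) hsum) (by exact not_le.mpr h1)

lemma mem_mono (hφ : ∀ t, IsOrliczFunction (φ t)) (f : K → ℝ) {ρ ρ' : ℝ}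
    (h : ρ ∈ orliczSet φ f) (hle : ρ ≤ ρ') : ρ' ∈ orliczSet φ f := by
  obtain ⟨hρ, hsum⟩ := h
  refine ⟨lt_of_lt_of_le hρ hle, le_trans (ENNReal.summable.tsum_le_tsum (fun t => ?_) ENNReal.summable) hsum⟩
  apply ENNReal.ofReal_le_ofReal
  exact mono (hφ t) (div_nonneg (abs_nonneg _) (le_trans hρ.le hle))
    (div_le_div_of_nonneg_left (abs_nonneg _) hρ hle)

lemma mem_add (hφ : ∀ t, IsOrliczFunction (φ t)) (f g : K → ℝ) {ρ σ : ℝ}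
    (hf : ρ ∈ orliczSet φ f) (hg : σ ∈ orliczSet φ g) :
    ρ + σ ∈ orliczSet φ (fun t => f t + g t) := by
  obtain ⟨hρ, hsf⟩ := hf
  obtain ⟨hσ, hsg⟩ := hg
  have hρσ : 0 < ρ + σ := by linarith
  refine ⟨hρσ, ?_⟩
  set w₁ := ρ / (ρ + σ) with hw₁
  set w₂ := σ / (ρ + σ) with hw₂
  have hw₁0 : 0 ≤ w₁ := by positivity
  have hw₂0 : 0 ≤ w₂ := by positivity
  have hw : w₁ + w₂ = 1 := by rw [hw₁, hw₂, ← add_div, div_self hρσ.ne']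
  have key : ∀ t, φ t (|f t + g t| / (ρ + σ))
      ≤ w₁ * φ t (|f t| / ρ) + w₂ * φ t (|g t| / σ) := by
    intro t
    have h1 : |f t + g t| / (ρ + σ) ≤ w₁ * (|f t| / ρ) + w₂ * (|g t| / σ) := by
      have : w₁ * (|f t| / ρ) + w₂ * (|g t| / σ) = (|f t| + |g t|) / (ρ + σ) := by
        rw [hw₁, hw₂]; field_simp
      rw [this]
      exact div_le_div_of_nonneg_right (abs_add_le _ _) hρσ.le
    have h2 : φ t (|f t + g t| / (ρ + σ)) ≤ φ t (w₁ * (|f t| / ρ) + w₂ * (|g t| / σ)) :=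
      mono (hφ t) (div_nonneg (abs_nonneg _) hρσ.le) h1
    have h3 : φ t (w₁ • (|f t| / ρ) + w₂ • (|g t| / σ))
        ≤ w₁ • φ t (|f t| / ρ) + w₂ • φ t (|g t| / σ) :=
      (hφ t).1.2 (Set.mem_Ici.mpr (div_nonneg (abs_nonneg _) hρ.le))
        (Set.mem_Ici.mpr (div_nonneg (abs_nonneg _) hσ.le)) hw₁0 hw₂0 hw
    simpa only [smul_eq_mul] using le_trans h2 h3
  calc ∑' t, ENNReal.ofReal (φ t (|f t + g t| / (ρ + σ)))
      ≤ ∑' t, (ENNReal.ofReal w₁ * ENNReal.ofReal (φ t (|f t| / ρ))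
          + ENNReal.ofReal w₂ * ENNReal.ofReal (φ t (|g t| / σ))) := by
        refine ENNReal.summable.tsum_le_tsum (fun t => ?_) ENNReal.summable
        refine le_trans (ENNReal.ofReal_le_ofReal (key t))
          (le_trans ENNReal.ofReal_add_le ?_)
        rw [ENNReal.ofReal_mul hw₁0, ENNReal.ofReal_mul hw₂0]
    _ = ENNReal.ofReal w₁ * ∑' t, ENNReal.ofReal (φ t (|f t| / ρ))
          + ENNReal.ofReal w₂ * ∑' t, ENNReal.ofReal (φ t (|g t| / σ)) := by
        rw [ENNReal.tsum_add, ENNReal.tsum_mul_left, ENNReal.tsum_mul_left]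
    _ ≤ ENNReal.ofReal w₁ * 1 + ENNReal.ofReal w₂ * 1 := by
        gcongr
    _ = 1 := by
        rw [mul_one, mul_one, ← ENNReal.ofReal_add hw₁0 hw₂0, hw, ENNReal.ofReal_one]


noncomputable def onorm (φ : K → ℝ → ℝ) (f : lp (fun _ : K => ℝ) ∞) : ℝ :=
  sInf (orliczSet φ (fun t => f t))

lemma bddBelow_orlicz (f : K → ℝ) : BddBelow (orliczSet φ f) :=
  ⟨0, fun _ hρ => hρ.1.le⟩

lemma coord_le_norm (f : lp (fun _ : K => ℝ) ∞) (t : K) : |f t| ≤ ‖f‖ := by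
  have h := lp.norm_apply_le_norm ENNReal.top_ne_zero f t
  rwa [Real.norm_eq_abs] at h

lemma orlicz_nonempty (hφ : ∀ t, IsOrliczFunction (φ t)) (hR : 0 < R)
    (hφR : ∀ t, φ t R = 0) (f : lp (fun _ : K => ℝ) ∞) :
    (orliczSet φ (fun t => f t)).Nonempty := by
  refine ⟨‖f‖ / R + 1, mem_orliczSet_of_le hφ hR hφR _ (by have := norm_nonneg f; have := div_nonneg this hR.le; linarith) fun t => ?_⟩
  have h1 := coord_le_norm f t
  have h2 : R * (‖f‖ / R + 1) = ‖f‖ + R := by rw [mul_add, mul_div_cancel₀ _ hR.ne', mul_one]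
  linarith

lemma onorm_le (hφ : ∀ t, IsOrliczFunction (φ t)) (hR : 0 < R)
    (hφR : ∀ t, φ t R = 0) (f : lp (fun _ : K => ℝ) ∞) {ρ : ℝ} (hρ : 0 < ρ)
    (hbd : ∀ t, |f t| ≤ R * ρ) : onorm φ f ≤ ρ :=
  csInf_le (bddBelow_orlicz _) (mem_orliczSet_of_le hφ hR hφR _ hρ hbd)

lemma onorm_le_norm_div (hφ : ∀ t, IsOrliczFunction (φ t)) (hR : 0 < R)
    (hφR : ∀ t, φ t R = 0) (f : lp (fun _ : K => ℝ) ∞) :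
    onorm φ f ≤ ‖f‖ / R := by
  refine le_of_forall_pos_le_add fun ε hε => ?_
  refine onorm_le hφ hR hφR f (by have := norm_nonneg f; have := div_nonneg this hR.le; linarith) fun t => ?_
  have h1 := coord_le_norm f t
  have h2 : R * (‖f‖ / R + ε) = ‖f‖ + R * ε := by rw [mul_add, mul_div_cancel₀ _ hR.ne']
  nlinarith

lemma norm_le_S_mul (hφ : ∀ t, IsOrliczFunction (φ t)) (hR : 0 < R) (hRS : R < S)
    (hφR : ∀ t, φ t R = 0) (hφS : ∀ t, 1 ≤ φ t S) (f : lp (fun _ : K => ℝ) ∞) :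
    ‖f‖ ≤ S * onorm φ f := by
  have hS : 0 < S := hR.trans hRS
  have key : ∀ ρ ∈ orliczSet φ (fun t => f t), ‖f‖ / S ≤ ρ := by
    intro ρ hρ
    rw [div_le_iff₀ hS]
    refine lp.norm_le_of_forall_le (by nlinarith [hρ.1]) fun t => ?_
    rw [Real.norm_eq_abs, mul_comm]
    exact abs_le_of_mem hφ hR.le hRS hφR hφS _ hρ t
  have := le_csInf (orlicz_nonempty hφ hR hφR f) key
  rw [div_le_iff₀ hS] at this
  rw [onorm]
  linarith

lemma onorm_nonneg' (hφ : ∀ t, IsOrliczFunction (φ t)) (hR : 0 < R)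
    (hφR : ∀ t, φ t R = 0) (f : lp (fun _ : K => ℝ) ∞) : 0 ≤ onorm φ f :=
  le_csInf (orlicz_nonempty hφ hR hφR f) fun _ hρ => hρ.1.le

lemma onorm_pos (hφ : ∀ t, IsOrliczFunction (φ t)) (hR : 0 < R) (hRS : R < S)
    (hφR : ∀ t, φ t R = 0) (hφS : ∀ t, 1 ≤ φ t S) {f : lp (fun _ : K => ℝ) ∞}
    (hf : f ≠ 0) : 0 < onorm φ f := by
  have h1 : 0 < ‖f‖ := norm_pos_iff.mpr hf
  have h2 := norm_le_S_mul hφ hR hRS hφR hφS f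
  have hS : 0 < S := hR.trans hRS
  nlinarith

lemma mem_of_onorm_lt (hφ : ∀ t, IsOrliczFunction (φ t)) (hR : 0 < R)
    (hφR : ∀ t, φ t R = 0) {f : lp (fun _ : K => ℝ) ∞} {ρ : ℝ}
    (h : onorm φ f < ρ) : ρ ∈ orliczSet φ (fun t => f t) := by
  obtain ⟨σ, hσmem, hσlt⟩ := exists_lt_of_csInf_lt (orlicz_nonempty hφ hR hφR f) h
  exact mem_mono hφ _ hσmem hσlt.le

lemma onorm_add_le (hφ : ∀ t, IsOrliczFunction (φ t)) (hR : 0 < R)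
    (hφR : ∀ t, φ t R = 0) (f g : lp (fun _ : K => ℝ) ∞) :
    onorm φ (f + g) ≤ onorm φ f + onorm φ g := by
  refine le_of_forall_pos_le_add fun ε hε => ?_
  have hf : onorm φ f < onorm φ f + ε / 2 := by linarith
  have hg : onorm φ g < onorm φ g + ε / 2 := by linarith
  have hmem := mem_add hφ _ _ (mem_of_onorm_lt hφ hR hφR hf) (mem_of_onorm_lt hφ hR hφR hg)
  have hcoe : (fun t => (f : K → ℝ) t + (g : K → ℝ) t) = fun t => (f + g) t := by
    funext t; rw [lp.coeFn_add]; rfl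
  rw [hcoe] at hmem
  have := csInf_le (bddBelow_orlicz _) hmem
  rw [onorm]
  linarith

lemma onorm_smul {c : ℝ} (hc : 0 < c) (f : lp (fun _ : K => ℝ) ∞) :
    onorm φ (c • f) = c * onorm φ f := by
  have hset : orliczSet φ (fun t => (c • f) t) = c • orliczSet φ (fun t => f t) := by
    ext ρ
    rw [Set.mem_smul_set_iff_inv_smul_mem₀ hc.ne']
    have hcoe : ∀ t : K, (c • f) t = c * f t := fun t => by rw [lp.coeFn_smul]; rfl
    simp only [orliczSet, Set.mem_setOf_eq, smul_eq_mul]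
    constructor
    · rintro ⟨hρ, hsum⟩
      have hρ' : 0 < c⁻¹ * ρ := by positivity
      refine ⟨hρ', ?_⟩
      have hpt : ∀ t : K, |f t| / (c⁻¹ * ρ) = |(c • f) t| / ρ := by
        intro t
        rw [hcoe t, abs_mul, abs_of_pos hc, div_eq_div_iff hρ'.ne' hρ.ne']
        field_simp
      rw [tsum_congr (fun t => by rw [hpt t])]
      exact hsum
    · rintro ⟨hρ', hsum⟩
      have hρ : 0 < ρ := by
        by_contra hle
        push_neg at hle
        nlinarith [inv_pos.mpr hc]
      refine ⟨hρ, ?_⟩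
      have hpt : ∀ t : K, |(c • f) t| / ρ = |f t| / (c⁻¹ * ρ) := by
        intro t
        rw [hcoe t, abs_mul, abs_of_pos hc, div_eq_div_iff hρ.ne' (by positivity : (0:ℝ) < c⁻¹ * ρ).ne']
        field_simp
      rw [tsum_congr (fun t => by rw [hpt t])]
      exact hsum
  rw [onorm, hset, Real.sInf_smul_of_nonneg hc.le, smul_eq_mul, onorm]

lemma abs_onorm_sub_le (hφ : ∀ t, IsOrliczFunction (φ t)) (hR : 0 < R)
    (hφR : ∀ t, φ t R = 0) (f g : lp (fun _ : K => ℝ) ∞) :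
    |onorm φ f - onorm φ g| ≤ ‖f - g‖ / R := by
  have h1 : onorm φ f ≤ onorm φ g + ‖f - g‖ / R := by
    have := onorm_add_le hφ hR hφR g (f - g)
    rw [add_sub_cancel] at this
    have h2 := onorm_le_norm_div hφ hR hφR (f - g)
    linarith
  have h2 : onorm φ g ≤ onorm φ f + ‖f - g‖ / R := by
    have := onorm_add_le hφ hR hφR f (g - f)
    rw [add_sub_cancel] at this
    have h3 := onorm_le_norm_div hφ hR hφR (g - f)
    rw [norm_sub_rev] at h3
    linarith
  rw [abs_sub_le_iff]
  constructor <;> linarith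

def evalCLM (t : K) : lp (fun _ : K => ℝ) ∞ →L[ℝ] ℝ :=
  LinearMap.mkContinuous
    { toFun := fun f => f t
      map_add' := fun f g => congrFun (lp.coeFn_add f g) t
      map_smul' := fun c f => congrFun (lp.coeFn_smul c f) t }
    1 (fun f => by
        rw [one_mul, Real.norm_eq_abs]
        have h := lp.norm_apply_le_norm ENNReal.top_ne_zero f t
        rw [Real.norm_eq_abs] at h
        exact h)

def Psi (φ : K → ℝ → ℝ) (F : Finset K) (p : lp (fun _ : K => ℝ) ∞ × ℝ) : ℝ :=
  ∑ t ∈ F, φ t |p.1 t / p.2|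

lemma psi_contDiffAt (hsmooth : ∀ t, ContDiff ℝ ((⊤ : ℕ∞) : WithTop ℕ∞) (fun x : ℝ => φ t |x|))
    (F : Finset K) {p : lp (fun _ : K => ℝ) ∞ × ℝ} (hp : p.2 ≠ 0) :
    ContDiffAt ℝ ((⊤ : ℕ∞) : WithTop ℕ∞) (Psi φ F) p := by
  refine ContDiffAt.sum fun t _ => ?_
  have hinner : ContDiffAt ℝ ((⊤ : ℕ∞) : WithTop ℕ∞)
      (fun q : lp (fun _ : K => ℝ) ∞ × ℝ => (evalCLM t) q.1 / q.2) p :=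
    ContDiffAt.div (((evalCLM t).contDiff.comp contDiff_fst).contDiffAt)
      contDiff_snd.contDiffAt hp
  exact ((hsmooth t).contDiffAt.comp p hinner :)

lemma psi_eq_sum (φ : K → ℝ → ℝ) (F : Finset K) (g : lp (fun _ : K => ℝ) ∞) {ρ : ℝ}
    (hρ : 0 < ρ) : Psi φ F (g, ρ) = ∑ t ∈ F, φ t (|g t| / ρ) := by
  refine Finset.sum_congr rfl fun t _ => ?_
  rw [abs_div, abs_of_pos hρ]

lemma key_local
    (hφ : ∀ t, IsOrliczFunction (φ t))
    (hsmooth : ∀ t, ContDiff ℝ ((⊤ : ℕ∞) : WithTop ℕ∞) (fun x : ℝ => φ t |x|))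
    {R S : ℝ} (hR : 0 < R) (hRS : R < S)
    (hφR : ∀ t, φ t R = 0) (hφS : ∀ t, 1 ≤ φ t S)
    (X : Submodule ℝ (lp (fun _ : K => ℝ) ∞))
    {g₀ : lp (fun _ : K => ℝ) ∞} (hg₀X : g₀ ∈ X) (hg₀ : onorm φ g₀ = 1)
    {δ : ℝ} (hδ : 0 < δ) (F : Finset K)
    (hF : ∀ g ∈ X, ‖g₀ - g‖ < δ → ∀ t ∉ F, φ t |g t| = 0) :
    ∃ G : lp (fun _ : K => ℝ) ∞ → ℝ,
      ContDiffAt ℝ ((⊤ : ℕ∞) : WithTop ℕ∞) G g₀ ∧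
      ∀ᶠ g in nhds g₀, g ∈ X → onorm φ g = G g := by
  classical
  have hone : (1 : WithTop ℕ∞) ≤ ((⊤ : ℕ∞) : WithTop ℕ∞) := by exact_mod_cast le_top
  have hone0 : ((⊤ : ℕ∞) : WithTop ℕ∞) ≠ 0 := by simp
  -- vanishing of coordinates outside F
  have vanish : ∀ g : lp (fun _ : K => ℝ) ∞, g ∈ X → ∀ ρ : ℝ, 0 < ρ →
      ‖g₀ - ρ⁻¹ • g‖ < δ → ∀ t ∉ F, φ t (|g t| / ρ) = 0 := by
    intro g hgX ρ hρ hnear t ht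
    have h := hF (ρ⁻¹ • g) (X.smul_mem _ hgX) hnear t ht
    have hc : (ρ⁻¹ • g) t = ρ⁻¹ * g t := congrFun (lp.coeFn_smul _ _) t
    rwa [hc, abs_mul, abs_inv, abs_of_pos hρ, inv_mul_eq_div] at h
  -- membership characterization via finite sum
  have memchar : ∀ g : lp (fun _ : K => ℝ) ∞, g ∈ X → ∀ ρ : ℝ, 0 < ρ →
      ‖g₀ - ρ⁻¹ • g‖ < δ →
      (ρ ∈ orliczSet φ (fun t => g t) ↔ Psi φ F (g, ρ) ≤ 1) := by
    intro g hgX ρ hρ hnear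
    have hsum : (∑' t, ENNReal.ofReal (φ t (|g t| / ρ)))
        = ENNReal.ofReal (∑ t ∈ F, φ t (|g t| / ρ)) := by
      rw [tsum_eq_sum (fun t ht => by
          rw [vanish g hgX ρ hρ hnear t ht, ENNReal.ofReal_zero]),
        ENNReal.ofReal_sum_of_nonneg fun t _ => nonneg (hφ t) (by positivity)]
    constructor
    · rintro ⟨_, hle⟩
      rw [psi_eq_sum φ F g hρ]
      rw [hsum, ENNReal.ofReal_le_one] at hle
      exact hle
    · intro hle
      refine ⟨hρ, ?_⟩
      rw [hsum, ENNReal.ofReal_le_one]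
      rwa [psi_eq_sum φ F g hρ] at hle
  -- closeness estimates
  set M : ℝ := ‖g₀‖ + 1 with hM
  have hM1 : 1 ≤ M := by have := norm_nonneg g₀; simp only [hM]; linarith
  set η : ℝ := min (4⁻¹ : ℝ) (δ / (2 * (1 + 2 * M))) with hη
  have h2Mpos : (0:ℝ) < 1 + 2 * M := by linarith
  have hηpos : 0 < η := lt_min (by norm_num) (by positivity)
  have hη4 : η ≤ 4⁻¹ := min_le_left _ _
  have hηδ : η * (1 + 2 * M) ≤ δ / 2 := by
    have h1 : η ≤ δ / (2 * (1 + 2 * M)) := min_le_right _ _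
    have h2 : (δ / (2 * (1 + 2 * M))) * (1 + 2 * M) = δ / 2 := by
      field_simp
    nlinarith
  have hclose : ∀ g : lp (fun _ : K => ℝ) ∞, ‖g - g₀‖ < η → ∀ ρ : ℝ, |ρ - 1| < η →
      0 < ρ ∧ ‖g₀ - ρ⁻¹ • g‖ < δ := by
    intro g hg ρ hρ
    obtain ⟨hρa, hρb⟩ := abs_lt.mp hρ
    have hρl : 1 - η < ρ := by linarith
    have hρpos : 0 < ρ := by
      have : (4⁻¹ : ℝ) < 1 := by norm_num
      linarith [hη4]
    refine ⟨hρpos, ?_⟩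
    have hgn : ‖g‖ ≤ M := by
      have h1 : ‖g‖ - ‖g₀‖ ≤ ‖g - g₀‖ := norm_sub_norm_le g g₀
      have : (4⁻¹ : ℝ) < 1 := by norm_num
      simp only [hM]
      linarith [hη4]
    have hkey : g₀ - ρ⁻¹ • g = (g₀ - g) + (1 - ρ⁻¹) • g := by
      rw [sub_smul, one_smul]
      abel
    have hnorm : ‖g₀ - ρ⁻¹ • g‖ ≤ ‖g₀ - g‖ + |1 - ρ⁻¹| * ‖g‖ := by
      rw [hkey]
      refine (norm_add_le _ _).trans ?_
      rw [norm_smul, Real.norm_eq_abs]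
    have h34 : (3:ℝ)/4 ≤ ρ := by
      have := hη4
      linarith
    have hinv : |1 - ρ⁻¹| ≤ 2 * η := by
      have heq : 1 - ρ⁻¹ = (ρ - 1) / ρ := by
        field_simp
      rw [heq, abs_div, abs_of_pos hρpos]
      rw [div_le_iff₀ hρpos]
      nlinarith [le_of_lt (abs_lt.mpr ⟨hρa, hρb⟩)]
    have hrev : ‖g₀ - g‖ = ‖g - g₀‖ := norm_sub_rev _ _
    have hmul : |1 - ρ⁻¹| * ‖g‖ ≤ 2 * η * M :=
      mul_le_mul hinv hgn (norm_nonneg g) (by positivity)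
    have hfinal : ‖g₀ - ρ⁻¹ • g‖ < η + 2 * η * M := by
      rw [hrev] at hnorm
      linarith
    have hrw : η + 2 * η * M = η * (1 + 2 * M) := by ring
    linarith
  -- norm characterization near g₀
  set κ : ℝ := min (η * R / 4) (η / 4) with hκ
  have hκpos : 0 < κ := lt_min (by positivity) (by positivity)
  have hnormdiff : ∀ g : lp (fun _ : K => ℝ) ∞, ‖g - g₀‖ < κ →
      |onorm φ g - 1| ≤ η / 4 := by
    intro g hg
    have h1 := abs_onorm_sub_le hφ hR hφR g g₀
    rw [hg₀] at h1
    have h2 : ‖g - g₀‖ ≤ η * R / 4 := le_of_lt (lt_of_lt_of_le hg (min_le_left _ _))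
    have h3 : ‖g - g₀‖ / R ≤ η / 4 := by
      rw [div_le_iff₀ hR]
      have hre : η / 4 * R = η * R / 4 := by ring
      linarith
    linarith
  have normchar : ∀ g : lp (fun _ : K => ℝ) ∞, g ∈ X → ‖g - g₀‖ < κ →
      Psi φ F (g, onorm φ g) = 1 := by
    intro g hgX hgκ
    set n := onorm φ g with hn
    have hn1 : |n - 1| ≤ η / 4 := hnormdiff g hgκ
    obtain ⟨hn1a, hn1b⟩ := abs_le.mp hn1
    have hnpos : 0 < n := by
      have : (4⁻¹:ℝ) < 1 := by norm_num
      linarith [hη4]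
    have hgη : ‖g - g₀‖ < η :=
      lt_of_lt_of_le hgκ ((min_le_right _ _).trans (by linarith))
    have hcont : ContinuousAt (fun ρ : ℝ => Psi φ F (g, ρ)) n := by
      have h1 := (psi_contDiffAt hsmooth F (p := (g, n)) (ne_of_gt hnpos)).continuousAt
      exact h1.comp ((continuous_const.prodMk continuous_id).continuousAt)
    have hle : Psi φ F (g, n) ≤ 1 := by
      have hev : ∀ ρ ∈ Set.Ioo n (n + η / 4), Psi φ F (g, ρ) ≤ 1 := by
        intro ρ hρmem
        obtain ⟨hm1, hm2⟩ := hρmem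
        have hρ1 : |ρ - 1| < η := by
          rw [abs_lt]
          constructor <;> nlinarith [hηpos]
        have hρpos : 0 < ρ := lt_trans hnpos hm1
        obtain ⟨_, hnear⟩ := hclose g hgη ρ hρ1
        exact (memchar g hgX ρ hρpos hnear).mp (mem_of_onorm_lt hφ hR hφR hm1)
      have htd : Filter.Tendsto (fun ρ : ℝ => Psi φ F (g, ρ))
          (nhdsWithin n (Set.Ioi n)) (nhds (Psi φ F (g, n))) :=
        hcont.tendsto.mono_left nhdsWithin_le_nhds
      refine le_of_tendsto htd ?_
      exact Filter.eventually_of_mem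
        (Ioo_mem_nhdsGT_of_mem ⟨le_refl n, by linarith⟩) hev
    have hge : 1 ≤ Psi φ F (g, n) := by
      by_contra hlt
      push_neg at hlt
      have hev : ∀ᶠ ρ in nhds n, Psi φ F (g, ρ) < 1 :=
        hcont.eventually_lt continuousAt_const hlt
      have hIoo : Set.Ioo (n - η / 4) n ∈ nhdsWithin n (Set.Iio n) :=
        Ioo_mem_nhdsLT_of_mem ⟨by linarith, le_refl n⟩
      have hev2 : ∀ᶠ ρ in nhdsWithin n (Set.Iio n),
          Psi φ F (g, ρ) < 1 ∧ ρ ∈ Set.Ioo (n - η / 4) n :=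
        (hev.filter_mono nhdsWithin_le_nhds).and (Filter.eventually_of_mem hIoo fun x hx => hx)
      obtain ⟨ρ, hρlt, hρmem⟩ := hev2.exists
      obtain ⟨hm1, hm2⟩ := hρmem
      have hρ1 : |ρ - 1| < η := by
        rw [abs_lt]
        constructor <;> nlinarith [hηpos]
      have hρpos : 0 < ρ := by nlinarith [hηpos]
      obtain ⟨_, hnear⟩ := hclose g hgη ρ hρ1
      have hmem : ρ ∈ orliczSet φ (fun t => g t) :=
        (memchar g hgX ρ hρpos hnear).mpr hρlt.le
      have : n ≤ ρ := csInf_le (bddBelow_orlicz _) hmem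
      linarith
    linarith
  -- base point
  have hbase : Psi φ F (g₀, 1) = 1 := by
    have h := normchar g₀ hg₀X (by rw [sub_self, norm_zero]; exact hκpos)
    rwa [hg₀] at h
  have hsum1 : ∑ t ∈ F, φ t |g₀ t| = 1 := by
    have h := hbase
    rw [psi_eq_sum φ F g₀ one_pos] at h
    simpa [div_one] using h
  -- the derivative in the ρ direction at the base point
  have hψa : ContDiffAt ℝ ((⊤ : ℕ∞) : WithTop ℕ∞) (Psi φ F) (g₀, 1) :=
    psi_contDiffAt hsmooth F (by norm_num)
  have hdiff : DifferentiableAt ℝ (Psi φ F) (g₀, 1) := hψa.differentiableAt hone0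
  set D : lp (fun _ : K => ℝ) ∞ × ℝ →L[ℝ] ℝ := fderiv ℝ (Psi φ F) (g₀, 1) with hD
  set b : ℝ := D ((0 : lp (fun _ : K => ℝ) ∞), (1 : ℝ)) with hb
  have hq1 : HasDerivAt (fun ρ : ℝ => Psi φ F (g₀, ρ)) b 1 := by
    have h1 : HasDerivAt (fun ρ : ℝ => ((g₀ : lp (fun _ : K => ℝ) ∞), ρ))
        ((0 : lp (fun _ : K => ℝ) ∞), (1 : ℝ)) 1 :=
      (hasDerivAt_const _ _).prodMk (hasDerivAt_id 1)
    exact hdiff.hasFDerivAt.comp_hasDerivAt 1 h1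
  have hq2 : HasDerivAt (fun ρ : ℝ => Psi φ F (g₀, ρ))
      (∑ t ∈ F, deriv (fun x : ℝ => φ t |x|) (g₀ t) * (-(g₀ t))) 1 := by
    have heach : ∀ t ∈ F, HasDerivAt (fun ρ : ℝ => φ t |g₀ t / ρ|)
        (deriv (fun x : ℝ => φ t |x|) (g₀ t) * (-(g₀ t))) 1 := by
      intro t _
      have hinner : HasDerivAt (fun ρ : ℝ => g₀ t / ρ) (-(g₀ t)) 1 := by
        have h1 : HasDerivAt (fun ρ : ℝ => ρ⁻¹) (-((1:ℝ) ^ 2)⁻¹) 1 :=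
          hasDerivAt_inv one_ne_zero
        have h2 := h1.const_mul (g₀ t)
        simp only [one_pow, inv_one] at h2
        have h3 : g₀ t * -1 = -(g₀ t) := by ring
        rw [h3] at h2
        simpa [div_eq_mul_inv] using h2
      have houter : HasDerivAt (fun x : ℝ => φ t |x|)
          (deriv (fun x : ℝ => φ t |x|) (g₀ t / 1)) (g₀ t / 1) :=
        (((hsmooth t).differentiable hone0) (g₀ t / 1)).hasDerivAt
      have := houter.comp 1 hinner
      simpa [div_one, Function.comp_def] using this
    have h := HasDerivAt.fun_sum heach
    have heq : (fun ρ : ℝ => Psi φ F (g₀, ρ)) = fun ρ : ℝ => ∑ t ∈ F, φ t |g₀ t / ρ| := by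
      funext ρ
      rfl
    rw [heq]
    exact h
  have hbeq : b = -∑ t ∈ F, g₀ t * deriv (fun x : ℝ => φ t |x|) (g₀ t) := by
    rw [hq1.unique hq2, ← Finset.sum_neg_distrib]
    exact Finset.sum_congr rfl fun t _ => by ring
  have hbneg : b < 0 := by
    have hex : ∃ t ∈ F, 0 < φ t |g₀ t| := by
      by_contra hno
      push_neg at hno
      have hzero : ∑ t ∈ F, φ t |g₀ t| = 0 :=
        Finset.sum_eq_zero fun t ht =>
          le_antisymm (hno t ht) (nonneg (hφ t) (abs_nonneg _))
      rw [hzero] at hsum1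
      norm_num at hsum1
    obtain ⟨t₀, ht₀F, ht₀⟩ := hex
    have hpos : 0 < ∑ t ∈ F, g₀ t * deriv (fun x : ℝ => φ t |x|) (g₀ t) := by
      refine Finset.sum_pos' (fun t ht => ?_) ⟨t₀, ht₀F, ?_⟩
      · rcases eq_or_lt_of_le (nonneg (hφ t) (abs_nonneg (g₀ t))) with heq | hlt
        · rw [deriv_abs_zero (hφ t) heq.symm, mul_zero]
        · exact (mul_deriv_abs_pos (hφ t) ((hsmooth t).differentiable hone0)
            hR.le (hφR t) hlt).le
      · exact mul_deriv_abs_pos (hφ t₀) ((hsmooth t₀).differentiable hone0)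
          hR.le (hφR t₀) ht₀
    rw [hbeq]
    linarith
  have hbne : b ≠ 0 := ne_of_lt hbneg
  -- the continuous linear equivalence
  have hsplit : ∀ (u : lp (fun _ : K => ℝ) ∞) (v : ℝ), D (u, v) = D (u, 0) + v * b := by
    intro u v
    have h1 : ((u, v) : lp (fun _ : K => ℝ) ∞ × ℝ)
        = (u, (0 : ℝ)) + v • ((0 : lp (fun _ : K => ℝ) ∞), (1 : ℝ)) := by
      rw [Prod.smul_mk, smul_zero, smul_eq_mul, mul_one, Prod.mk_add_mk, add_zero, zero_add]
    rw [h1, map_add, map_smul, smul_eq_mul, hb]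
  set A : (lp (fun _ : K => ℝ) ∞ × ℝ) →L[ℝ] ℝ :=
    D.comp ((ContinuousLinearMap.inl ℝ (lp (fun _ : K => ℝ) ∞) ℝ).comp
      (ContinuousLinearMap.fst ℝ (lp (fun _ : K => ℝ) ∞) ℝ)) with hA
  set L₁ : (lp (fun _ : K => ℝ) ∞ × ℝ) →L[ℝ] (lp (fun _ : K => ℝ) ∞ × ℝ) :=
    (ContinuousLinearMap.fst ℝ (lp (fun _ : K => ℝ) ∞) ℝ).prod D with hL₁
  set L₂ : (lp (fun _ : K => ℝ) ∞ × ℝ) →L[ℝ] (lp (fun _ : K => ℝ) ∞ × ℝ) :=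
    (ContinuousLinearMap.fst ℝ (lp (fun _ : K => ℝ) ∞) ℝ).prod
      (b⁻¹ • (ContinuousLinearMap.snd ℝ (lp (fun _ : K => ℝ) ∞) ℝ - A)) with hL₂
  have hA_apply : ∀ p : lp (fun _ : K => ℝ) ∞ × ℝ, A p = D (p.1, 0) := by
    intro p
    simp [hA]
  have hLinv1 : Function.LeftInverse L₂ L₁ := by
    intro p
    have h1 : (L₁ p).1 = p.1 := rfl
    have h2 : (L₂ (L₁ p)).1 = p.1 := rfl
    have h3 : (L₂ (L₁ p)).2 = b⁻¹ * (D p - D (p.1, 0)) := by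
      simp [hL₂, hL₁, hA_apply]
    have h4 : D p - D (p.1, 0) = p.2 * b := by
      have := hsplit p.1 p.2
      rw [Prod.mk.eta] at this
      linarith
    have h5 : (L₂ (L₁ p)).2 = p.2 := by
      rw [h3, h4]
      field_simp
    exact Prod.ext h2 h5
  have hLinv2 : Function.RightInverse L₂ L₁ := by
    intro p
    have h2 : (L₁ (L₂ p)).1 = p.1 := rfl
    have h3 : (L₁ (L₂ p)).2 = D (p.1, b⁻¹ * (p.2 - D (p.1, 0))) := by
      simp [hL₁, hL₂, hA_apply]
    have h4 : D (p.1, b⁻¹ * (p.2 - D (p.1, 0))) = p.2 := by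
      rw [hsplit p.1 _]
      field_simp; ring
    exact Prod.ext h2 (by rw [h3, h4])
  set Leq := ContinuousLinearEquiv.equivOfInverse L₁ L₂ hLinv1 hLinv2 with hLeq
  set Gm : lp (fun _ : K => ℝ) ∞ × ℝ → lp (fun _ : K => ℝ) ∞ × ℝ :=
    fun p => (p.1, Psi φ F p) with hGm
  have hGcd : ContDiffAt ℝ ((⊤ : ℕ∞) : WithTop ℕ∞) Gm (g₀, 1) :=
    contDiff_fst.contDiffAt.prodMk hψa
  have hG' : HasFDerivAt Gm (Leq : (lp (fun _ : K => ℝ) ∞ × ℝ) →L[ℝ]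
      (lp (fun _ : K => ℝ) ∞ × ℝ)) (g₀, 1) := by
    have h1 : HasFDerivAt Gm L₁ (g₀, 1) := hasFDerivAt_fst.prodMk hdiff.hasFDerivAt
    exact h1
  have hGa : Gm (g₀, 1) = (g₀, 1) := by
    simp only [hGm, hbase]
  set inv := hGcd.localInverse hG' hone0 with hinv
  have hinvcd : ContDiffAt ℝ ((⊤ : ℕ∞) : WithTop ℕ∞) inv (g₀, 1) := by
    have h2 := hGcd.to_localInverse (hf' := hG') (hn := hone0)
    rwa [hGa] at h2
  have hinv_at : inv (g₀, 1) = (g₀, 1) := by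
    have h2 := hGcd.localInverse_apply_image (hf' := hG') (hn := hone0)
    rwa [hGa] at h2
  have hright : ∀ᶠ y in nhds ((g₀, 1) : lp (fun _ : K => ℝ) ∞ × ℝ), Gm (inv y) = y := by
    have h2 := (hGcd.hasStrictFDerivAt' hG' hone0).eventually_right_inverse
    rwa [hGa] at h2
  set σf : lp (fun _ : K => ℝ) ∞ → ℝ := fun g => (inv (g, 1)).2 with hσf
  have hmkcd : ContDiffAt ℝ ((⊤ : ℕ∞) : WithTop ℕ∞)
      (fun g : lp (fun _ : K => ℝ) ∞ => (g, (1 : ℝ))) g₀ :=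
    contDiff_id.contDiffAt.prodMk contDiff_const.contDiffAt
  have hσcd : ContDiffAt ℝ ((⊤ : ℕ∞) : WithTop ℕ∞) σf g₀ :=
    contDiff_snd.contDiffAt.comp g₀ (hinvcd.comp g₀ hmkcd)
  have hσ0 : σf g₀ = 1 := by
    simp only [hσf, hinv_at]
  have hσcont : ContinuousAt σf g₀ := hσcd.continuousAt
  have htend : Filter.Tendsto (fun g : lp (fun _ : K => ℝ) ∞ => (g, (1 : ℝ)))
      (nhds g₀) (nhds ((g₀, 1) : lp (fun _ : K => ℝ) ∞ × ℝ)) :=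
    (continuous_id.prodMk continuous_const).continuousAt
  have hev2 : ∀ᶠ g in nhds g₀, Psi φ F (g, σf g) = 1 := by
    filter_upwards [htend.eventually hright] with g hg
    have h1 : (inv (g, 1)).1 = g := congrArg Prod.fst hg
    have h2 : Psi φ F (inv (g, 1)) = 1 := congrArg Prod.snd hg
    have h3 : ((g, σf g) : lp (fun _ : K => ℝ) ∞ × ℝ) = inv (g, 1) :=
      Prod.ext h1.symm rfl
    rw [h3]
    exact h2
  -- strict antitonicity region
  have hUopen : IsOpen {p : lp (fun _ : K => ℝ) ∞ × ℝ | 0 < p.2} :=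
    isOpen_lt continuous_const continuous_snd
  have hψU : ContDiffOn ℝ ((⊤ : ℕ∞) : WithTop ℕ∞) (Psi φ F)
      {p : lp (fun _ : K => ℝ) ∞ × ℝ | 0 < p.2} := fun p hp =>
    (psi_contDiffAt hsmooth F (ne_of_gt hp)).contDiffWithinAt
  have hfc : ContinuousOn (fderiv ℝ (Psi φ F)) {p : lp (fun _ : K => ℝ) ∞ × ℝ | 0 < p.2} :=
    hψU.continuousOn_fderiv_of_isOpen hUopen hone
  have hκc : ContinuousOn
      (fun p : lp (fun _ : K => ℝ) ∞ × ℝ =>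
        fderiv ℝ (Psi φ F) p ((0 : lp (fun _ : K => ℝ) ∞), (1 : ℝ)))
      {p : lp (fun _ : K => ℝ) ∞ × ℝ | 0 < p.2} :=
    hfc.clm_apply continuousOn_const
  have hWopen : IsOpen ({p : lp (fun _ : K => ℝ) ∞ × ℝ | 0 < p.2} ∩
      (fun p : lp (fun _ : K => ℝ) ∞ × ℝ =>
        fderiv ℝ (Psi φ F) p ((0 : lp (fun _ : K => ℝ) ∞), (1 : ℝ))) ⁻¹' Set.Iio 0) :=
    hκc.isOpen_inter_preimage hUopen isOpen_Iio
  have haW : ((g₀, 1) : lp (fun _ : K => ℝ) ∞ × ℝ) ∈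
      {p : lp (fun _ : K => ℝ) ∞ × ℝ | 0 < p.2} ∩
      (fun p : lp (fun _ : K => ℝ) ∞ × ℝ =>
        fderiv ℝ (Psi φ F) p ((0 : lp (fun _ : K => ℝ) ∞), (1 : ℝ))) ⁻¹' Set.Iio 0 := by
    constructor
    · show (0:ℝ) < ((g₀, (1:ℝ)) : lp (fun _ : K => ℝ) ∞ × ℝ).2
      exact one_pos
    · show fderiv ℝ (Psi φ F) (g₀, 1) ((0 : lp (fun _ : K => ℝ) ∞), (1 : ℝ)) ∈ Set.Iio 0
      exact hbneg
  obtain ⟨r, hrpos, hball⟩ := Metric.isOpen_iff.mp hWopen _ haW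
  set r' : ℝ := min (r / 2) (4⁻¹ : ℝ) with hr'
  have hr'pos : 0 < r' := lt_min (by linarith) (by norm_num)
  have hr'4 : r' ≤ 4⁻¹ := min_le_right _ _
  have hr'r : r' < r := lt_of_le_of_lt (min_le_left _ _) (by linarith)
  have hmemW : ∀ g : lp (fun _ : K => ℝ) ∞, ‖g - g₀‖ < r' → ∀ ρ : ℝ, |ρ - 1| ≤ r' →
      (0 < ρ ∧ fderiv ℝ (Psi φ F) (g, ρ) ((0 : lp (fun _ : K => ℝ) ∞), (1 : ℝ)) < 0) := by
    intro g hg ρ hρ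
    have hmem : ((g, ρ) : lp (fun _ : K => ℝ) ∞ × ℝ) ∈ Metric.ball
        ((g₀, 1) : lp (fun _ : K => ℝ) ∞ × ℝ) r := by
      rw [Metric.mem_ball, Prod.dist_eq]
      apply max_lt
      · rw [dist_eq_norm]
        exact lt_of_lt_of_le hg hr'r.le
      · rw [Real.dist_eq]
        exact lt_of_le_of_lt hρ hr'r
    have := hball hmem
    exact ⟨this.1, this.2⟩
  have hanti : ∀ g : lp (fun _ : K => ℝ) ∞, ‖g - g₀‖ < r' →
      StrictAntiOn (fun ρ : ℝ => Psi φ F (g, ρ)) (Set.Icc (1 - r') (1 + r')) := by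
    intro g hg
    have hderiv : ∀ ρ ∈ Set.Icc (1 - r') (1 + r'),
        HasDerivAt (fun ρ : ℝ => Psi φ F (g, ρ))
          (fderiv ℝ (Psi φ F) (g, ρ) ((0 : lp (fun _ : K => ℝ) ∞), (1 : ℝ))) ρ := by
      intro ρ hρ
      obtain ⟨hρ1, hρ2⟩ := hρ
      have hρpos : 0 < ρ := by
        have : (4⁻¹:ℝ) < 1 := by norm_num
        linarith [hr'4]
      have hd : DifferentiableAt ℝ (Psi φ F) (g, ρ) :=
        (psi_contDiffAt hsmooth F (ne_of_gt hρpos)).differentiableAt hone0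
      exact hd.hasFDerivAt.comp_hasDerivAt ρ ((hasDerivAt_const _ _).prodMk (hasDerivAt_id _))
    refine strictAntiOn_of_deriv_neg (convex_Icc _ _) ?_ ?_
    · intro ρ hρ
      exact ((hderiv ρ hρ).continuousAt).continuousWithinAt
    · intro ρ hρ
      rw [interior_Icc] at hρ
      have hρ' : ρ ∈ Set.Icc (1 - r') (1 + r') := Set.mem_Icc_of_Ioo hρ
      rw [(hderiv ρ hρ').deriv]
      obtain ⟨hρ1, hρ2⟩ := hρ
      exact (hmemW g hg ρ (abs_le.mpr ⟨by linarith, by linarith⟩)).2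
  -- conclusion
  refine ⟨σf, hσcd, ?_⟩
  set ε : ℝ := min κ (min r' (R * r' / 2)) with hε
  have hεpos : 0 < ε := lt_min hκpos (lt_min hr'pos (by positivity))
  have hball1 : ∀ᶠ g in nhds g₀, ‖g - g₀‖ < ε := by
    filter_upwards [Metric.ball_mem_nhds g₀ hεpos] with g hg
    rwa [Metric.mem_ball, dist_eq_norm] at hg
  have hσnear : ∀ᶠ g in nhds g₀, |σf g - 1| < r' := by
    have h1 : ∀ᶠ x in nhds (1 : ℝ), |x - 1| < r' := by
      filter_upwards [Metric.ball_mem_nhds (1 : ℝ) hr'pos] with x hx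
      rwa [Metric.mem_ball, Real.dist_eq] at hx
    have h2 := hσcont.tendsto
    rw [hσ0] at h2
    exact h2.eventually h1
  filter_upwards [hball1, hσnear, hev2] with g hg1 hg2 hg3 hgX
  have hκg : ‖g - g₀‖ < κ := lt_of_lt_of_le hg1 (min_le_left _ _)
  have hr'g : ‖g - g₀‖ < r' :=
    lt_of_lt_of_le hg1 ((min_le_right _ _).trans (min_le_left _ _))
  have hRr : ‖g - g₀‖ < R * r' / 2 :=
    lt_of_lt_of_le hg1 ((min_le_right _ _).trans (min_le_right _ _))
  have hpsin : Psi φ F (g, onorm φ g) = 1 := normchar g hgX hκg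
  have hn1 : |onorm φ g - 1| < r' := by
    have h1 := abs_onorm_sub_le hφ hR hφR g g₀
    rw [hg₀] at h1
    have h2 : ‖g - g₀‖ / R < r' / 2 := by
      rw [div_lt_iff₀ hR]
      have hre : r' / 2 * R = R * r' / 2 := by ring
      linarith
    have h3 : r' / 2 < r' := by linarith
    linarith
  have hmemI : ∀ x : ℝ, |x - 1| ≤ r' → x ∈ Set.Icc (1 - r') (1 + r') := by
    intro x hx
    obtain ⟨h1, h2⟩ := abs_le.mp hx
    exact ⟨by linarith, by linarith⟩
  exact (hanti g hr'g).injOn (hmemI _ hn1.le) (hmemI _ hg2.le) (by rw [hpsin, hg3])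

end OrliczProof

theorem stmt_12 (K : Type*) (φ : K → ℝ → ℝ) (hφ : ∀ t, IsOrliczFunction (φ t))
    (hsmooth : ∀ t, ContDiff ℝ ((⊤ : ℕ∞) : WithTop ℕ∞) (fun x : ℝ => φ t |x|))
    (R S : ℝ) (hR : 0 < R) (hRS : R < S)
    (hφR : ∀ t, φ t R = 0) (hφS : ∀ t, 1 ≤ φ t S)
    (X : Submodule ℝ (lp (fun _ : K => ℝ) ∞))
    (hloc : ∀ f ∈ X, sInf (orliczSet φ (fun t => f t)) = 1 →
      ∃ δ > (0 : ℝ), ∃ F : Finset K, ∀ g ∈ X, ‖f - g‖ < δ → ∀ t ∉ F, φ t |g t| = 0) :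
    ContDiffOn ℝ ((⊤ : ℕ∞) : WithTop ℕ∞)
      (fun f : X => sInf (orliczSet φ (fun t => (f : lp (fun _ : K => ℝ) ∞) t)))
      {f : X | f ≠ 0} := by
  intro f₀ hf₀
  suffices h : ContDiffAt ℝ ((⊤ : ℕ∞) : WithTop ℕ∞)
      (fun f : X => OrliczProof.onorm φ (f : lp (fun _ : K => ℝ) ∞)) f₀ by
    exact h.contDiffWithinAt
  have hf₀ne : (f₀ : lp (fun _ : K => ℝ) ∞) ≠ 0 := fun h => hf₀ (Subtype.ext h)
  set c : ℝ := OrliczProof.onorm φ (f₀ : lp (fun _ : K => ℝ) ∞) with hc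
  have hcpos : 0 < c := OrliczProof.onorm_pos hφ hR hRS hφR hφS hf₀ne
  set g₀ : lp (fun _ : K => ℝ) ∞ := c⁻¹ • (f₀ : lp (fun _ : K => ℝ) ∞) with hg₀def
  have hg₀X : g₀ ∈ X := X.smul_mem _ f₀.2
  have hg₀1 : OrliczProof.onorm φ g₀ = 1 := by
    rw [hg₀def, OrliczProof.onorm_smul (inv_pos.mpr hcpos), ← hc,
      inv_mul_cancel₀ (ne_of_gt hcpos)]
  obtain ⟨δ, hδ, F, hF⟩ := hloc g₀ hg₀X hg₀1
  obtain ⟨G, hGcd, hGev⟩ :=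
    OrliczProof.key_local hφ hsmooth hR hRS hφR hφS X hg₀X hg₀1 hδ F hF
  set L : X →L[ℝ] lp (fun _ : K => ℝ) ∞ := c⁻¹ • X.subtypeL with hL
  have hLf : ∀ f : X, L f = c⁻¹ • (f : lp (fun _ : K => ℝ) ∞) := fun f => rfl
  have hLf₀ : L f₀ = g₀ := by rw [hLf, hg₀def]
  have hcd : ContDiffAt ℝ ((⊤ : ℕ∞) : WithTop ℕ∞)
      (fun f : X => c * G (L f)) f₀ := by
    refine contDiffAt_const.mul ?_
    have h1 : ContDiffAt ℝ ((⊤ : ℕ∞) : WithTop ℕ∞) G (L f₀) := by rwa [hLf₀]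
    exact h1.comp f₀ L.contDiff.contDiffAt
  refine hcd.congr_of_eventuallyEq ?_
  have htend : Filter.Tendsto L (nhds f₀) (nhds g₀) := by
    rw [← hLf₀]
    exact L.continuous.continuousAt
  filter_upwards [htend.eventually hGev] with f hf
  have hmem : L f ∈ X := by
    rw [hLf]
    exact X.smul_mem _ f.2
  have h1 : OrliczProof.onorm φ (L f) = G (L f) := hf hmem
  have h2 : OrliczProof.onorm φ (L f)
      = c⁻¹ * OrliczProof.onorm φ (f : lp (fun _ : K => ℝ) ∞) := by
    rw [hLf]
    exact OrliczProof.onorm_smul (inv_pos.mpr hcpos) _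
  show OrliczProof.onorm φ (f : lp (fun _ : K => ℝ) ∞) = c * G (L f)
  rw [← h1, h2]
  field_simp
end
end

section
/- Let K be a compact Hausdorff space, let (D_i)_{i∈ℕ} be pairwise disjoint subsets with K = ⋃_{i∈ℕ} D_i and D_i ∩ D_i' = ∅ for every i, and let r_i ∈ (0,1) be reals whose infinite product converges to a positive limit. Define α(t) = ∏{r_i : t ∈ closure(D_i)} and β(t) = ∏{r_i : t ∈ D_i'}. Let f ∈ C(K) satisfy |f(t)| < β(t) for all t ∈ K. Then there exist δ > 0 and a finite subset F of K such that for every g ∈ C(K) with ‖f − g‖∞ < δ and every t ∉ F one has |g(t)| < α(t). -/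
open Filter Topology

/-- If `r` has positive infinite product and values in `(0,1)`, the logs are summable. -/
lemma aux_summable_log {r : ℕ → ℝ} (hr : ∀ i, r i ∈ Set.Ioo (0:ℝ) 1)
    (hmul : Multipliable r) (hpos : 0 < ∏' i, r i) :
    Summable fun i => Real.log (r i) := by
  have hrpos : ∀ i, 0 < r i := fun i => (hr i).1
  have hev : ∀ᶠ F : Finset ℕ in Filter.atTop, (∏' i, r i) / 2 < ∏ i ∈ F, r i :=
    hmul.hasProd.eventually_const_lt (half_lt_self hpos)
  obtain ⟨F₀, hF₀⟩ := Filter.eventually_atTop.mp hev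
  have hall : ∀ F : Finset ℕ, (∏' i, r i) / 2 ≤ ∏ i ∈ F, r i := by
    intro F
    have h1 : (∏' i, r i) / 2 < ∏ i ∈ F ∪ F₀, r i :=
      hF₀ _ Finset.subset_union_right
    have h2 : ∏ i ∈ F ∪ F₀, r i ≤ ∏ i ∈ F, r i := by
      rw [← Finset.union_sdiff_self_eq_union, Finset.prod_union Finset.disjoint_sdiff]
      refine mul_le_of_le_one_right (Finset.prod_pos (fun i _ => hrpos i)).le ?_
      exact Finset.prod_le_one (fun i _ => (hrpos i).le) (fun i _ => (hr i).2.le)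
    linarith
  have hnegsum : Summable fun i => -Real.log (r i) := by
    refine summable_of_sum_le (c := -Real.log ((∏' i, r i)/2))
      (fun i => neg_nonneg.mpr (Real.log_nonpos (hrpos i).le (hr i).2.le)) ?_
    intro F
    have hlogprod : Real.log (∏ i ∈ F, r i) = ∑ i ∈ F, Real.log (r i) :=
      Real.log_prod (fun i _ => (hrpos i).ne')
    have hlogle : Real.log ((∏' i, r i)/2) ≤ Real.log (∏ i ∈ F, r i) :=
      Real.log_le_log (by positivity) (hall F)
    rw [Finset.sum_neg_distrib]
    linarith
  exact hnegsum.neg.congr fun i => neg_neg _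

/-- Product over a subset as exponential of a sum of logs. -/
lemma aux_tprod_eq {r : ℕ → ℝ} (hrpos : ∀ i, 0 < r i)
    (hL : Summable fun i => Real.log (r i)) (M : Set ℕ) :
    ∏' i : M, r i = Real.exp (∑' i, M.indicator (fun j => Real.log (r j)) i) := by
  have h1 : Summable fun i : M => Real.log (r i) := hL.subtype M
  have h2 : HasProd (fun i : M => r i)
      (Real.exp (∑' i : M, Real.log (r i))) := by
    have h3 := h1.hasSum.rexp
    have heq : (fun i : M => r ↑i) = Real.exp ∘ fun i : M => Real.log (r ↑i) := by
      funext i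
      exact (Real.exp_log (hrpos i)).symm
    rw [heq]
    exact h3
  rw [h2.tprod_eq, ← tsum_subtype]

/-- Monotonicity: larger index set, smaller sum of nonpositive terms. -/
lemma aux_mono {L : ℕ → ℝ} (hL : Summable L) (hneg : ∀ i, L i ≤ 0)
    {S T : Set ℕ} (h : S ⊆ T) :
    ∑' i, T.indicator L i ≤ ∑' i, S.indicator L i := by
  refine Summable.tsum_le_tsum (fun i => ?_) (hL.indicator T) (hL.indicator S)
  by_cases hiS : i ∈ S
  · rw [Set.indicator_of_mem hiS, Set.indicator_of_mem (h hiS)]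
  · rw [Set.indicator_of_notMem hiS]
    by_cases hiT : i ∈ T
    · rw [Set.indicator_of_mem hiT]; exact hneg i
    · rw [Set.indicator_of_notMem hiT]

/-- Superadditivity over a covering union, for nonpositive terms. -/
lemma aux_union {L : ℕ → ℝ} (hL : Summable L) (hneg : ∀ i, L i ≤ 0)
    {S T U : Set ℕ} (h : S ⊆ T ∪ U) :
    (∑' i, T.indicator L i) + (∑' i, U.indicator L i) ≤ ∑' i, S.indicator L i := by
  rw [← Summable.tsum_add (hL.indicator T) (hL.indicator U)]
  refine Summable.tsum_le_tsum (fun i => ?_) ((hL.indicator T).add (hL.indicator U)) (hL.indicator S)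
  by_cases hiS : i ∈ S
  · rcases h hiS with hiT | hiU
    · by_cases hiU : i ∈ U
      · rw [Set.indicator_of_mem hiT, Set.indicator_of_mem hiU, Set.indicator_of_mem hiS]
        linarith [hneg i]
      · rw [Set.indicator_of_mem hiT, Set.indicator_of_notMem hiU, Set.indicator_of_mem hiS]
        linarith
    · by_cases hiT : i ∈ T
      · rw [Set.indicator_of_mem hiT, Set.indicator_of_mem hiU, Set.indicator_of_mem hiS]
        linarith [hneg i]
      · rw [Set.indicator_of_notMem hiT, Set.indicator_of_mem hiU, Set.indicator_of_mem hiS]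
        linarith
  · rw [Set.indicator_of_notMem hiS]
    have h1 : T.indicator L i ≤ 0 := Set.indicator_apply_nonpos (fun _ => hneg i)
    have h2 : U.indicator L i ≤ 0 := Set.indicator_apply_nonpos (fun _ => hneg i)
    linarith

/-- Tail estimate: sums over subsets of a far tail are small. -/
lemma aux_tail {L : ℕ → ℝ} (hL : Summable L) (hneg : ∀ i, L i ≤ 0)
    {ε : ℝ} (hε : 0 < ε) :
    ∃ N : ℕ, ∀ M : Set ℕ, M ⊆ {i | N ≤ i} → -ε ≤ ∑' i, M.indicator L i := by
  have h1 := hL.hasSum.tendsto_sum_nat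
  have h2 : ∀ᶠ n in atTop, ∑ i ∈ Finset.range n, L i < (∑' i, L i) + ε :=
    h1.eventually_lt_const (lt_add_of_pos_right _ hε)
  obtain ⟨N, hN⟩ := h2.exists
  refine ⟨N, fun M hM => ?_⟩
  have hsplit : ∀ i, L i =
      ({i | N ≤ i} : Set ℕ).indicator L i + ({i | i < N} : Set ℕ).indicator L i := by
    intro i
    by_cases hi : N ≤ i
    · rw [Set.indicator_of_mem (show i ∈ {i | N ≤ i} from hi),
        Set.indicator_of_notMem (show i ∉ {i | i < N} from by simpa using hi)]
      ring
    · rw [Set.indicator_of_notMem (show i ∉ {i | N ≤ i} from hi),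
        Set.indicator_of_mem (show i ∈ {i | i < N} from lt_of_not_ge hi)]
      ring
  have htot : ∑' i, L i =
      (∑' i, ({i | N ≤ i} : Set ℕ).indicator L i)
        + ∑' i, ({i | i < N} : Set ℕ).indicator L i := by
    rw [← Summable.tsum_add (hL.indicator _) (hL.indicator _)]
    exact tsum_congr hsplit
  have h3 : ∑' i, ({i | i < N} : Set ℕ).indicator L i = ∑ i ∈ Finset.range N, L i := by
    rw [tsum_eq_sum (s := Finset.range N)
      (fun i hi => Set.indicator_of_notMem (by simpa using hi) L)]
    exact Finset.sum_congr rfl fun i hi => Set.indicator_of_mem (by simpa using hi) L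
  have h4 : ∑' i, ({i | N ≤ i} : Set ℕ).indicator L i ≤ ∑' i, M.indicator L i :=
    aux_mono hL hneg hM
  rw [h3] at htot
  linarith
lemma aux_nhds {X : Type*} [TopologicalSpace X] [T1Space X] {A : Set X} {x : X}
    (h : x ∉ derivedSet A) : ∃ U ∈ 𝓝 x, ∀ y ∈ U, y ∈ closure A → y = x := by
  rw [← derivedSet_closure] at h
  rw [mem_derivedSet, accPt_iff_nhds] at h
  push_neg at h
  obtain ⟨U, hU, h⟩ := h
  exact ⟨U, hU, fun y hy hyc => h y ⟨hy, hyc⟩⟩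

/-- `α(t) = ∏ { r_i : t ∈ closure (D i) }`. -/
noncomputable def alphaWeight {K : Type*} [TopologicalSpace K]
    (D : ℕ → Set K) (r : ℕ → ℝ) (t : K) : ℝ :=
  ∏' i : {i : ℕ // t ∈ closure (D i)}, r i.1

/-- `β(t) = ∏ { r_i : t ∈ (D i)' }`, where `(D i)'` is the derived set of `D i`. -/
noncomputable def betaWeight {K : Type*} [TopologicalSpace K]
    (D : ℕ → Set K) (r : ℕ → ℝ) (t : K) : ℝ :=
  ∏' i : {i : ℕ // t ∈ derivedSet (D i)}, r i.1

theorem stmt_15 (K : Type*) [TopologicalSpace K] [CompactSpace K] [T2Space K]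
    (D : ℕ → Set K)
    (hdisj : Pairwise (Function.onFun Disjoint D))
    (hcover : ⋃ i, D i = Set.univ)
    (hdiscr : ∀ i, D i ∩ derivedSet (D i) = ∅)
    (r : ℕ → ℝ) (hr : ∀ i, r i ∈ Set.Ioo (0 : ℝ) 1)
    (hmul : Multipliable r) (hpos : 0 < ∏' i, r i)
    (f : C(K, ℝ)) (hf : ∀ t, |f t| < betaWeight D r t) :
    ∃ δ > (0 : ℝ), ∃ F : Finset K, ∀ g : C(K, ℝ), ‖f - g‖ < δ →
      ∀ t ∉ F, |g t| < alphaWeight D r t := by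
  classical
  set L : ℕ → ℝ := fun i => Real.log (r i) with hLdef
  have hrpos : ∀ i, 0 < r i := fun i => (hr i).1
  have hneg : ∀ i, L i ≤ 0 := fun i => Real.log_nonpos (hrpos i).le (hr i).2.le
  have hL : Summable L := aux_summable_log hr hmul hpos
  have halpha : ∀ t, alphaWeight D r t
      = Real.exp (∑' i, Set.indicator {i | t ∈ closure (D i)} L i) :=
    fun t => aux_tprod_eq hrpos hL {i | t ∈ closure (D i)}
  have hbeta : ∀ t, betaWeight D r t
      = Real.exp (∑' i, Set.indicator {i | t ∈ derivedSet (D i)} L i) :=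
    fun t => aux_tprod_eq hrpos hL {i | t ∈ derivedSet (D i)}
  obtain ⟨δ, hδ, hfin⟩ : ∃ δ > (0:ℝ), {t | alphaWeight D r t ≤ |f t| + δ}.Finite := by
    by_contra hcon
    push_neg at hcon
    set A : ℕ → Set K := fun n => {t | alphaWeight D r t ≤ |f t| + 1/(n+1)} with hA
    have hAinf : ∀ n, (A n).Infinite := fun n => hcon _ (by positivity)
    have hAanti : ∀ n, A (n + 1) ⊆ A n := by
      intro n t ht
      have ht' : alphaWeight D r t ≤ |f t| + 1/((n:ℝ)+1+1) := by
        have := ht; simp only [hA, Set.mem_setOf_eq] at this; push_cast at this ⊢; linarith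
      show alphaWeight D r t ≤ |f t| + 1/((n:ℝ)+1)
      have h5 : (1:ℝ)/((n:ℝ)+1+1) ≤ 1/((n:ℝ)+1) := by
        apply one_div_le_one_div_of_le
        · positivity
        · linarith
      linarith
    obtain ⟨t₀, ht₀⟩ := IsCompact.nonempty_iInter_of_sequence_nonempty_isCompact_isClosed
      (fun n => derivedSet (A n))
      (fun n => derivedSet_mono _ _ (hAanti n))
      (fun n => (hAinf n).exists_accPt_principal)
      (isClosed_derivedSet _).isCompact
      (fun n => isClosed_derivedSet _)
    simp only [Set.mem_iInter] at ht₀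
    set M₀ : Set ℕ := {i | t₀ ∈ derivedSet (D i)} with hM₀
    set B₀ : ℝ := ∑' i, M₀.indicator L i with hB₀
    have hfb : |f t₀| < Real.exp B₀ := by rw [← hbeta t₀]; exact hf t₀
    set η : ℝ := Real.exp B₀ - |f t₀| with hηdef
    have hη : 0 < η := by simp only [hηdef]; linarith
    set ε : ℝ := η / (2 * (Real.exp B₀ + 1)) with hεdef
    have hE1 : (0:ℝ) < Real.exp B₀ + 1 := by positivity
    have hε : 0 < ε := by positivity
    have hε2 : ε * (Real.exp B₀ + 1) = η / 2 := by
      rw [hεdef]; field_simp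
    obtain ⟨N, hN⟩ := aux_tail hL hneg hε
    have hU : ∀ i, ∃ U ∈ 𝓝 t₀, i ∉ M₀ → ∀ y ∈ U, y ∈ closure (D i) → y = t₀ := by
      intro i
      by_cases hi : i ∈ M₀
      · exact ⟨Set.univ, Filter.univ_mem, fun h => absurd hi h⟩
      · obtain ⟨U, hU1, hU2⟩ := aux_nhds (show t₀ ∉ derivedSet (D i) from hi)
        exact ⟨U, hU1, fun _ => hU2⟩
    choose U hUmem hUprop using hU
    have hfev : ∀ᶠ t in 𝓝 t₀, |f t| < |f t₀| + ε :=
      ((continuous_abs.comp f.continuous).tendsto t₀).eventually_lt_const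
        (lt_add_of_pos_right _ hε)
    have hV : ({t | |f t| < |f t₀| + ε} ∩ ⋂ i ∈ Finset.range N, U i) ∈ 𝓝 t₀ :=
      Filter.inter_mem hfev ((Filter.biInter_finset_mem _).mpr fun i _ => hUmem i)
    obtain ⟨n, hn⟩ := exists_nat_gt (2/η)
    have hn1 : (1:ℝ)/(n+1) < η/2 := by
      rw [div_lt_div_iff₀ (by positivity) (by norm_num)]
      have h2 : 2/η < (n:ℝ)+1 := hn.trans (lt_add_one _)
      have := (div_lt_iff₀ hη).mp h2
      linarith
    obtain ⟨t, ⟨htV, htA⟩, htne⟩ := accPt_iff_nhds.mp (ht₀ n) _ hV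
    have hsub : {i | t ∈ closure (D i)} ⊆ M₀ ∪ {i | N ≤ i} := by
      intro i hi
      by_cases h1 : i ∈ M₀
      · exact Or.inl h1
      by_cases h2 : N ≤ i
      · exact Or.inr h2
      exfalso
      have htU : t ∈ U i := by
        have := htV.2
        simp only [Set.mem_iInter] at this
        exact this i (Finset.mem_range.mpr (lt_of_not_ge h2))
      exact htne (hUprop i h1 t htU hi)
    have hsum1 : B₀ + ∑' i, Set.indicator {i | N ≤ i} L i
        ≤ ∑' i, Set.indicator {i | t ∈ closure (D i)} L i := aux_union hL hneg hsub
    have hsum2 : -ε ≤ ∑' i, Set.indicator {i | N ≤ i} L i := hN _ (subset_refl _)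
    have halp : Real.exp (B₀ - ε) ≤ alphaWeight D r t := by
      rw [halpha t]
      exact Real.exp_le_exp.mpr (by linarith)
    have hlow : Real.exp B₀ * (1 - ε) ≤ Real.exp (B₀ - ε) := by
      rw [Real.exp_sub, div_eq_mul_inv]
      have h1 : 1 - ε ≤ Real.exp (-ε) := by linarith [Real.add_one_le_exp (-ε)]
      have h2 : Real.exp (-ε) = (Real.exp ε)⁻¹ := Real.exp_neg ε
      rw [← h2]
      exact mul_le_mul_of_nonneg_left h1 (Real.exp_pos B₀).le
    have htup : alphaWeight D r t ≤ |f t| + 1/(n+1) := htA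
    have hft : |f t| < |f t₀| + ε := htV.1
    have hend : Real.exp B₀ * (1 - ε) < |f t₀| + ε + 1/(n+1) := by linarith
    have : η < ε * (Real.exp B₀ + 1) + 1/(n+1) := by nlinarith [Real.exp_pos B₀]
    rw [hε2] at this
    linarith
  refine ⟨δ, hδ, hfin.toFinset, fun g hg t ht => ?_⟩
  rw [Set.Finite.mem_toFinset] at ht
  have h1 : |f t| + δ < alphaWeight D r t := lt_of_not_ge ht
  have h2 : |g t| - |f t| ≤ |g t - f t| := abs_sub_abs_le_abs_sub _ _
  have h3 : |g t - f t| ≤ ‖f - g‖ := by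
    rw [abs_sub_comm]
    have := ContinuousMap.norm_coe_le_norm (f - g) t
    simpa [Real.norm_eq_abs] using this
  linarith
end
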